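/- arXiv:2208.10476 — 3 statements merged into one kernel-verified Lean document; each statement's English description precedes it below -/
import Mathlib

section
/- A symmetric monomial ideal is polymatroidal if and only if it is a symmetric strongly shifted ideal with exactly one partition Borel generator (i.e., a principal Borel sssi Sss({λ}) for some partition λ). -/
open MvPolynomial

/-- The monomial `x^a` in `K[x_1,...,x_n]`. -/
noncomputable def mon (K : Type) [Field K] (n : ℕ) (a : Fin n → ℕ) :
    MvPolynomial (Fin n) K :=
  monomial (Finsupp.equivFunOnFinite.symm a) 1

/-- A monomial ideal: an ideal generated by monomials. -/
def IsMonomialIdeal (K : Type) [Field K] (n : ℕ)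
    (I : Ideal (MvPolynomial (Fin n) K)) : Prop :=
  ∃ S : Set (Fin n → ℕ), I = Ideal.span (mon K n '' S)

/-- A symmetric (`𝔖_n`-fixed) ideal. -/
def IsSymmetricIdeal (K : Type) [Field K] (n : ℕ)
    (I : Ideal (MvPolynomial (Fin n) K)) : Prop :=
  ∀ σ : Equiv.Perm (Fin n), Ideal.map (rename (σ : Fin n → Fin n)) I = I

/-- The exponent vector obtained from `a` by the Borel move `x^a ↦ x^a · x_i / x_j`. -/
def borelMoveVec (n : ℕ) (a : Fin n → ℕ) (i j : Fin n) : Fin n → ℕ :=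
  fun k => if k = i then a k + 1 else if k = j then a k - 1 else a k

/-- A symmetric strongly shifted ideal (sssi). -/
def IsSSSI (K : Type) [Field K] (n : ℕ)
    (I : Ideal (MvPolynomial (Fin n) K)) : Prop :=
  IsMonomialIdeal K n I ∧ IsSymmetricIdeal K n I ∧
    ∀ lam : Fin n → ℕ, Monotone lam → mon K n lam ∈ I →
      ∀ i j : Fin n, i < j → lam i < lam j →
        mon K n (borelMoveVec n lam i j) ∈ I

/-- The dominance order on partitions: `μ ⊴ λ`. -/
def dominates (n : ℕ) (μ lam : Fin n → ℕ) : Prop :=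
  ∀ k : Fin n, ∑ i ∈ Finset.Ici k, μ i ≤ ∑ i ∈ Finset.Ici k, lam i

/-- `Sss(B)`: the smallest symmetric strongly shifted ideal containing the
monomials `x^λ`, `λ ∈ B`. -/
noncomputable def Sss (K : Type) [Field K] (n : ℕ) (B : Set (Fin n → ℕ)) :
    Ideal (MvPolynomial (Fin n) K) :=
  sInf {J | IsSSSI K n J ∧ ∀ lam ∈ B, mon K n lam ∈ J}

/-- `a` is the exponent vector of a minimal monomial generator of the
monomial ideal `I`. -/
def IsMinGen (K : Type) [Field K] (n : ℕ) (I : Ideal (MvPolynomial (Fin n) K))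
    (a : Fin n → ℕ) : Prop :=
  mon K n a ∈ I ∧ ∀ b : Fin n → ℕ, (∀ i, b i ≤ a i) → b ≠ a → mon K n b ∉ I

/-- A polymatroidal ideal: an equigenerated monomial ideal whose minimal
monomial generators satisfy the exchange property. -/
def IsPolymatroidal (K : Type) [Field K] (n : ℕ)
    (I : Ideal (MvPolynomial (Fin n) K)) : Prop :=
  IsMonomialIdeal K n I ∧
    (∃ d : ℕ, ∀ a : Fin n → ℕ, IsMinGen K n I a → ∑ i, a i = d) ∧
    ∀ a b : Fin n → ℕ, IsMinGen K n I a → IsMinGen K n I b →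
      ∀ i : Fin n, b i < a i →
        ∃ j : Fin n, a j < b j ∧ mon K n (borelMoveVec n a j i) ∈ I

section Basics

variable {K : Type} [Field K] {n : ℕ}

lemma mon_mem_span_iff {S : Set (Fin n → ℕ)} {a : Fin n → ℕ} :
    mon K n a ∈ Ideal.span (mon K n '' S) ↔ ∃ s ∈ S, ∀ i, s i ≤ a i := by
  have h : mon K n '' S =
      (fun s => monomial s (1:K)) '' ((fun v => Finsupp.equivFunOnFinite.symm v) '' S) := by
    rw [Set.image_image]; rfl
  rw [h, MvPolynomial.mem_ideal_span_monomial_image]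
  constructor
  · intro H
    have hsupp : (Finsupp.equivFunOnFinite.symm a) ∈ (mon K n a).support := by
      classical
      rw [mon, MvPolynomial.support_monomial, if_neg (one_ne_zero)]
      exact Finset.mem_singleton_self _
    obtain ⟨si, hsi, hle⟩ := H _ hsupp
    obtain ⟨s, hs, rfl⟩ := hsi
    refine ⟨s, hs, fun i => ?_⟩
    simpa using hle i
  · rintro ⟨s, hs, hle⟩ xi hxi
    have h2 := MvPolynomial.support_monomial_subset hxi
    rw [Finset.mem_singleton] at h2
    subst h2
    exact ⟨_, Set.mem_image_of_mem _ hs, fun i => by simpa using hle i⟩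

lemma mon_mul_mon (a b : Fin n → ℕ) : mon K n a * mon K n b = mon K n (a + b) := by
  rw [mon, mon, mon, MvPolynomial.monomial_mul, one_mul]
  have : Finsupp.equivFunOnFinite.symm a + Finsupp.equivFunOnFinite.symm b
      = Finsupp.equivFunOnFinite.symm (a + b) := by
    ext i; simp
  rw [this]

lemma rename_mon (σ : Equiv.Perm (Fin n)) (a : Fin n → ℕ) :
    rename (σ : Fin n → Fin n) (mon K n a) = mon K n (a ∘ σ.symm) := by
  rw [mon, MvPolynomial.rename_monomial, mon]
  have : Finsupp.mapDomain (⇑σ) (Finsupp.equivFunOnFinite.symm a)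
      = Finsupp.equivFunOnFinite.symm (a ∘ ⇑σ.symm) := by
    ext x
    rw [Finsupp.mapDomain_equiv_apply (f := σ)]
    simp
  rw [this]

lemma mon_perm_mem {I : Ideal (MvPolynomial (Fin n) K)} (hsym : IsSymmetricIdeal K n I)
    {a : Fin n → ℕ} (ha : mon K n a ∈ I) (σ : Equiv.Perm (Fin n)) :
    mon K n (a ∘ σ) ∈ I := by
  have := Ideal.mem_map_of_mem (rename ((σ.symm : Equiv.Perm (Fin n)) : Fin n → Fin n)) ha
  rw [hsym σ.symm] at this
  rw [rename_mon] at this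
  simpa using this

end Basics
section MinGen

variable {K : Type} [Field K] {n : ℕ} {I : Ideal (MvPolynomial (Fin n) K)}

lemma eq_of_le_of_sum_eq {a b : Fin n → ℕ} (hle : ∀ i, b i ≤ a i)
    (hsum : ∑ i, b i = ∑ i, a i) : b = a := by
  funext i
  by_contra hne
  have hlt : b i < a i := lt_of_le_of_ne (hle i) hne
  have : ∑ i, b i < ∑ i, a i :=
    Finset.sum_lt_sum (fun j _ => hle j) ⟨i, Finset.mem_univ i, hlt⟩
  omega

lemma sum_lt_of_le_of_ne {a b : Fin n → ℕ} (hle : ∀ i, b i ≤ a i) (hne : b ≠ a) :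
    ∑ i, b i < ∑ i, a i := by
  rcases Function.ne_iff.mp hne with ⟨i, hi⟩
  exact Finset.sum_lt_sum (fun j _ => hle j) ⟨i, Finset.mem_univ i, lt_of_le_of_ne (hle i) hi⟩

lemma mon_mem_of_le {s a : Fin n → ℕ} (h : mon K n s ∈ I) (hle : ∀ i, s i ≤ a i) :
    mon K n a ∈ I := by
  have : mon K n a = mon K n (fun i => a i - s i) * mon K n s := by
    rw [mon_mul_mon]
    congr 1
    funext i
    simp only [Pi.add_apply]
    have := hle i
    omega
  rw [this]
  exact Ideal.mul_mem_left _ _ h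

lemma exists_minGen_le (hmono : IsMonomialIdeal K n I) {a : Fin n → ℕ}
    (ha : mon K n a ∈ I) : ∃ b, IsMinGen K n I b ∧ ∀ i, b i ≤ a i := by
  suffices H : ∀ (d : ℕ) (a : Fin n → ℕ), mon K n a ∈ I → ∑ i, a i = d →
      ∃ b, IsMinGen K n I b ∧ ∀ i, b i ≤ a i by
    exact H _ a ha rfl
  intro d
  induction d using Nat.strong_induction_on with
  | _ d ih =>
    intro a ha hd
    by_cases h : IsMinGen K n I a
    · exact ⟨a, h, fun i => le_rfl⟩
    · rw [IsMinGen] at h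
      push_neg at h
      obtain ⟨b, hble, hbne, hbI⟩ := h ha
      obtain ⟨c, hc, hcle⟩ := ih (∑ i, b i) (hd ▸ sum_lt_of_le_of_ne hble hbne) b hbI rfl
      exact ⟨c, hc, fun i => le_trans (hcle i) (hble i)⟩

lemma mon_mem_iff_minGen (hmono : IsMonomialIdeal K n I) {a : Fin n → ℕ} :
    mon K n a ∈ I ↔ ∃ b, IsMinGen K n I b ∧ ∀ i, b i ≤ a i := by
  constructor
  · exact exists_minGen_le hmono
  · rintro ⟨b, hb, hle⟩
    exact mon_mem_of_le hb.1 hle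

lemma minGen_perm (hsym : IsSymmetricIdeal K n I) {a : Fin n → ℕ}
    (ha : IsMinGen K n I a) (σ : Equiv.Perm (Fin n)) : IsMinGen K n I (a ∘ σ) := by
  refine ⟨mon_perm_mem hsym ha.1 σ, fun b hble hbne hbI => ?_⟩
  have h1 : mon K n (b ∘ σ.symm) ∈ I := mon_perm_mem hsym hbI σ.symm
  have h2 : ∀ i, (b ∘ σ.symm) i ≤ a i := by
    intro i
    have := hble (σ.symm i)
    simpa using this
  have h3 : b ∘ ⇑σ.symm ≠ a := by
    intro h
    apply hbne
    funext i
    have := congrFun h (σ i)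
    simpa using this
  exact ha.2 _ h2 h3 h1

lemma minGen_deg {d : ℕ} (hd : ∀ a : Fin n → ℕ, IsMinGen K n I a → ∑ i, a i = d)
    (hmono : IsMonomialIdeal K n I) {a : Fin n → ℕ} (ha : mon K n a ∈ I)
    (hsum : ∑ i, a i = d) : IsMinGen K n I a := by
  obtain ⟨b, hb, hble⟩ := exists_minGen_le hmono ha
  have : b = a := eq_of_le_of_sum_eq hble (by rw [hsum, hd b hb])
  exact this ▸ hb

lemma exists_minGen (hmono : IsMonomialIdeal K n I) (hbot : I ≠ ⊥) :
    ∃ a, IsMinGen K n I a := by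
  obtain ⟨S, hS⟩ := hmono
  rcases Set.eq_empty_or_nonempty S with h | ⟨s, hs⟩
  · exfalso; apply hbot; rw [hS, h]; simp
  · have : mon K n s ∈ I := hS ▸ Ideal.subset_span (Set.mem_image_of_mem _ hs)
    obtain ⟨b, hb, _⟩ := exists_minGen_le ⟨S, hS⟩ this
    exact ⟨b, hb⟩

lemma ideal_le_of_minGen_mem (hmono : IsMonomialIdeal K n I)
    {J : Ideal (MvPolynomial (Fin n) K)}
    (h : ∀ a, IsMinGen K n I a → mon K n a ∈ J) : I ≤ J := by
  obtain ⟨S, hS⟩ := hmono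
  rw [hS]
  rw [Ideal.span_le]
  rintro x ⟨s, hs, rfl⟩
  have hsI : mon K n s ∈ I := hS ▸ Ideal.subset_span (Set.mem_image_of_mem _ hs)
  obtain ⟨b, hb, hble⟩ := exists_minGen_le ⟨S, hS⟩ hsI
  exact mon_mem_of_le (h b hb) hble

end MinGen
section TopSum

variable {n : ℕ}

/-- The maximum of `∑ i ∈ S, a i` over subsets `S` of size at most `m`. -/
def topSum (m : ℕ) (a : Fin n → ℕ) : ℕ :=
  ((Finset.univ : Finset (Fin n)).powerset.filter fun S => S.card ≤ m).sup
    fun S => ∑ i ∈ S, a i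

lemma sum_le_topSum {m : ℕ} {a : Fin n → ℕ} {S : Finset (Fin n)} (h : S.card ≤ m) :
    ∑ i ∈ S, a i ≤ topSum m a :=
  Finset.le_sup (f := fun S => ∑ i ∈ S, a i) (by simp [h])

lemma topSum_spec (m : ℕ) (a : Fin n → ℕ) :
    ∃ S : Finset (Fin n), S.card ≤ m ∧ topSum m a = ∑ i ∈ S, a i := by
  obtain ⟨S, hS, hval⟩ := Finset.exists_mem_eq_sup
    ((Finset.univ : Finset (Fin n)).powerset.filter fun S => S.card ≤ m)
    ⟨∅, by simp⟩ (fun S => ∑ i ∈ S, a i)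
  simp only [Finset.mem_filter] at hS
  exact ⟨S, hS.2, hval⟩

lemma topSum_mono_m {m m' : ℕ} (h : m ≤ m') (a : Fin n → ℕ) :
    topSum m a ≤ topSum m' a := by
  apply Finset.sup_le
  intro S hS
  simp only [Finset.mem_filter] at hS
  exact sum_le_topSum (le_trans hS.2 h)

lemma topSum_mono {m : ℕ} {a b : Fin n → ℕ} (h : ∀ i, a i ≤ b i) :
    topSum m a ≤ topSum m b := by
  apply Finset.sup_le
  intro S hS
  simp only [Finset.mem_filter] at hS
  exact le_trans (Finset.sum_le_sum fun i _ => h i) (sum_le_topSum hS.2)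

lemma topSum_zero (a : Fin n → ℕ) : topSum 0 a = 0 := by
  apply Nat.le_antisymm _ (Nat.zero_le _)
  apply Finset.sup_le
  intro S hS
  simp only [Finset.mem_filter, Nat.le_zero, Finset.card_eq_zero] at hS
  simp [hS.2]

lemma topSum_perm (m : ℕ) (a : Fin n → ℕ) (σ : Equiv.Perm (Fin n)) :
    topSum m (a ∘ σ) = topSum m a := by
  have key : ∀ (b : Fin n → ℕ) (τ : Equiv.Perm (Fin n)),
      topSum m (b ∘ τ) ≤ topSum m b := by
    intro b τ
    apply Finset.sup_le
    intro S hS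
    simp only [Finset.mem_filter] at hS
    have himg : ∑ i ∈ S.image (⇑τ), b i = ∑ i ∈ S, b (τ i) :=
      Finset.sum_image (fun x _ y _ h => τ.injective h)
    calc ∑ i ∈ S, (b ∘ τ) i = ∑ i ∈ S.image (⇑τ), b i := himg.symm
      _ ≤ topSum m b := sum_le_topSum
          (by rw [Finset.card_image_of_injective _ τ.injective]; exact hS.2)
  refine le_antisymm (key a σ) ?_
  have := key (a ∘ σ) σ.symm
  have h2 : (a ∘ ⇑σ) ∘ ⇑σ.symm = a := by
    funext i; simp
  rwa [h2] at this

lemma topSum_succ_le {m D : ℕ} {a : Fin n → ℕ} (hD : ∀ i, a i ≤ D) :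
    topSum (m + 1) a ≤ topSum m a + D := by
  apply Finset.sup_le
  intro S hS
  simp only [Finset.mem_filter] at hS
  rcases S.eq_empty_or_nonempty with rfl | ⟨s, hs⟩
  · simp
  · have : ∑ i ∈ S, a i = ∑ i ∈ S.erase s, a i + a s :=
      (Finset.sum_erase_add _ _ hs).symm
    rw [this]
    have hc : (S.erase s).card ≤ m := by
      have := Finset.card_erase_of_mem hs
      omega
    exact Nat.add_le_add (sum_le_topSum hc) (hD s)

lemma topSum_concave (m : ℕ) (a : Fin n → ℕ) :
    topSum m a + topSum (m + 2) a ≤ topSum (m + 1) a + topSum (m + 1) a := by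
  obtain ⟨S, hScard, hSval⟩ := topSum_spec m a
  obtain ⟨U, hUcard, hUval⟩ := topSum_spec (m + 2) a
  by_cases h : ∃ u ∈ U, u ∉ S
  · obtain ⟨u, huU, huS⟩ := h
    have h1 : ∑ i ∈ insert u S, a i = a u + ∑ i ∈ S, a i := Finset.sum_insert huS
    have h2 : ∑ i ∈ U, a i = a u + ∑ i ∈ U.erase u, a i :=
      (Finset.add_sum_erase _ _ huU).symm
    rw [hSval, hUval, h2]
    have e1 : ∑ i ∈ insert u S, a i ≤ topSum (m + 1) a :=
      sum_le_topSum (le_trans (Finset.card_insert_le _ _) (by omega))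
    have e2 : ∑ i ∈ U.erase u, a i ≤ topSum (m + 1) a := by
      apply sum_le_topSum
      have := Finset.card_erase_of_mem huU
      omega
    omega
  · push_neg at h
    have hsub : U ⊆ S := h
    have : topSum (m + 2) a ≤ topSum m a := by
      rw [hUval]
      exact sum_le_topSum (le_trans (Finset.card_le_card hsub) hScard)
    have h3 : topSum m a ≤ topSum (m + 1) a := topSum_mono_m (by omega) a
    omega

lemma topSum_incr_antitone (a : Fin n → ℕ) :
    ∀ p q, p ≤ q → topSum (q + 1) a + topSum p a ≤ topSum q a + topSum (p + 1) a := by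
  intro p q hpq
  induction q with
  | zero =>
    interval_cases p
    omega
  | succ q ih =>
    rw [show q + 1 + 1 = q + 2 from rfl]
    rcases Nat.lt_or_ge p (q + 1) with h | h
    · have hih := ih (by omega)
      have hc := topSum_concave q a
      omega
    · have : p = q + 1 := by omega
      subst this
      rw [show q + 1 + 1 = q + 2 from rfl]
      omega

lemma topSum_four (a : Fin n → ℕ) :
    ∀ (j p s : ℕ), p ≤ s →
      topSum (s + j) a + topSum p a ≤ topSum s a + topSum (p + j) a := by
  intro j
  induction j with
  | zero => intro p s _; simp
  | succ j ih =>
    intro p s hps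
    have h1 := ih p s hps
    have h2 := topSum_incr_antitone a (p + j) (s + j) (by omega)
    have e1 : s + (j + 1) = s + j + 1 := by omega
    have e2 : p + (j + 1) = p + j + 1 := by omega
    rw [e1, e2]
    omega

lemma sum_le_sum_Ici {a : Fin n → ℕ} (hmono : Monotone a) (k : Fin n) :
    ∀ (N : ℕ) (S : Finset (Fin n)), (S \ Finset.Ici k).card ≤ N →
      S.card ≤ (Finset.Ici k).card → ∑ i ∈ S, a i ≤ ∑ i ∈ Finset.Ici k, a i := by
  intro N
  induction N with
  | zero =>
    intro S hN hcard
    have hsub : S ⊆ Finset.Ici k := by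
      intro x hx
      by_contra hxk
      have : x ∈ S \ Finset.Ici k := Finset.mem_sdiff.mpr ⟨hx, hxk⟩
      have := Finset.card_pos.mpr ⟨x, this⟩
      omega
    exact Finset.sum_le_sum_of_subset hsub
  | succ N ih =>
    intro S hN hcard
    by_cases hsub : S ⊆ Finset.Ici k
    · exact Finset.sum_le_sum_of_subset hsub
    · obtain ⟨s, hsS, hsk⟩ := Finset.not_subset.mp hsub
      -- find t ∈ Ici k \ S
      have hinter : (S ∩ Finset.Ici k).card < (Finset.Ici k).card := by
        have h1 : (S ∩ Finset.Ici k).card + (S \ Finset.Ici k).card = S.card :=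
          Finset.card_inter_add_card_sdiff _ _
        have h2 : 0 < (S \ Finset.Ici k).card :=
          Finset.card_pos.mpr ⟨s, Finset.mem_sdiff.mpr ⟨hsS, hsk⟩⟩
        omega
      have hex : ((Finset.Ici k) \ S).Nonempty := by
        rw [← Finset.card_pos]
        have h1 : (Finset.Ici k ∩ S).card + (Finset.Ici k \ S).card = (Finset.Ici k).card :=
          Finset.card_inter_add_card_sdiff _ _
        rw [Finset.inter_comm] at h1
        omega
      obtain ⟨t, ht⟩ := hex
      rw [Finset.mem_sdiff] at ht
      have hst : a s ≤ a t := by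
        apply hmono
        have h1 : ¬ k ≤ s := fun h => hsk (Finset.mem_Ici.mpr h)
        have h2 : k ≤ t := Finset.mem_Ici.mp ht.1
        exact le_trans (le_of_lt (not_le.mp h1)) h2
      set S' := insert t (S.erase s) with hS'
      have htS' : t ∉ S.erase s := fun h => ht.2 (Finset.mem_of_mem_erase h)
      have hcard' : S'.card ≤ (Finset.Ici k).card := by
        rw [hS', Finset.card_insert_of_notMem htS', Finset.card_erase_of_mem hsS]
        have : 0 < S.card := Finset.card_pos.mpr ⟨s, hsS⟩
        omega
      have hsdiff : (S' \ Finset.Ici k).card ≤ N := by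
        have hsub2 : S' \ Finset.Ici k ⊆ (S \ Finset.Ici k).erase s := by
          intro x hx
          rw [Finset.mem_sdiff] at hx
          rcases Finset.mem_insert.mp hx.1 with rfl | hx2
          · exact absurd ht.1 hx.2
          · rw [Finset.mem_erase] at hx2 ⊢
            exact ⟨hx2.1, Finset.mem_sdiff.mpr ⟨hx2.2, hx.2⟩⟩
        have h3 := Finset.card_le_card hsub2
        have h4 : s ∈ S \ Finset.Ici k := Finset.mem_sdiff.mpr ⟨hsS, hsk⟩
        have h5 := Finset.card_erase_of_mem h4
        omega
      have hstep : ∑ i ∈ S, a i ≤ ∑ i ∈ S', a i := by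
        rw [hS', Finset.sum_insert htS']
        have : ∑ i ∈ S, a i = a s + ∑ i ∈ S.erase s, a i :=
          (Finset.add_sum_erase _ _ hsS).symm
        omega
      exact le_trans hstep (ih S' hsdiff hcard')

lemma topSum_sorted {a : Fin n → ℕ} (hmono : Monotone a) (k : Fin n) :
    topSum (Finset.Ici k).card a = ∑ i ∈ Finset.Ici k, a i := by
  apply le_antisymm
  · apply Finset.sup_le
    intro S hS
    simp only [Finset.mem_filter] at hS
    exact sum_le_sum_Ici hmono k _ S le_rfl hS.2
  · exact sum_le_topSum le_rfl

end TopSum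
section Chain

variable {K : Type} [Field K] {n : ℕ}

lemma sum_split_le (f : Fin n → ℕ) (j : Fin n) :
    ∑ x ∈ Finset.Iic j, f x + ∑ x ∈ Finset.Ioi j, f x = ∑ x, f x := by
  rw [← Finset.sum_union (by
    simp only [Finset.disjoint_left, Finset.mem_Iic, Finset.mem_Ioi]
    intro x h1 h2
    exact absurd h1 (not_le.mpr h2))]
  congr 1
  ext x
  simp only [Finset.mem_union, Finset.mem_Iic, Finset.mem_Ioi, Finset.mem_univ, iff_true]
  exact le_or_gt x j

lemma sum_single_split {S : Finset (Fin n)} {f g : Fin n → ℕ} {j : Fin n}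
    (hj : j ∈ S) (hcong : ∀ x ∈ S, x ≠ j → f x = g x) :
    ∑ x ∈ S, f x + g j = ∑ x ∈ S, g x + f j := by
  have e1 : ∑ x ∈ S, f x = f j + ∑ x ∈ S.erase j, f x := (Finset.add_sum_erase _ _ hj).symm
  have e2 : ∑ x ∈ S, g x = g j + ∑ x ∈ S.erase j, g x := (Finset.add_sum_erase _ _ hj).symm
  have e3 : ∑ x ∈ S.erase j, f x = ∑ x ∈ S.erase j, g x := by
    apply Finset.sum_congr rfl
    intro x hx
    rw [Finset.mem_erase] at hx
    exact hcong x hx.2 hx.1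
  omega

lemma sum_pair_split {S : Finset (Fin n)} {f g : Fin n → ℕ} {i j : Fin n} (hij : i ≠ j)
    (hi : i ∈ S) (hj : j ∈ S) (hcong : ∀ x ∈ S, x ≠ i → x ≠ j → f x = g x) :
    ∑ x ∈ S, f x + g i + g j = ∑ x ∈ S, g x + f i + f j := by
  have e1 : ∑ x ∈ S, f x = f i + ∑ x ∈ S.erase i, f x := (Finset.add_sum_erase _ _ hi).symm
  have e2 : ∑ x ∈ S, g x = g i + ∑ x ∈ S.erase i, g x := (Finset.add_sum_erase _ _ hi).symm
  have hjerase : j ∈ S.erase i := Finset.mem_erase.mpr ⟨Ne.symm hij, hj⟩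
  have e3 := sum_single_split (f := f) (g := g) hjerase (fun x hx hxj =>
    hcong x (Finset.mem_of_mem_erase hx) (Finset.ne_of_mem_erase hx) hxj)
  omega

/-- Any monotone `mu` with the same total degree dominated by `lam` (in cut sums)
belongs to every SSSI containing `mon lam`. -/
lemma chain_lemma {J : Ideal (MvPolynomial (Fin n) K)} (hJ : IsSSSI K n J)
    {mu : Fin n → ℕ} (hmu : Monotone mu) :
    ∀ (lam : Fin n → ℕ), Monotone lam → mon K n lam ∈ J →
    (∑ i, mu i = ∑ i, lam i) →
    (∀ k : Fin n, ∑ x ∈ Finset.Ici k, mu x ≤ ∑ x ∈ Finset.Ici k, lam x) →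
    mon K n mu ∈ J := by
  suffices H : ∀ (D : ℕ) (lam : Fin n → ℕ), Monotone lam → mon K n lam ∈ J →
      (∑ i, mu i = ∑ i, lam i) →
      (∀ k : Fin n, ∑ x ∈ Finset.Ici k, mu x ≤ ∑ x ∈ Finset.Ici k, lam x) →
      (∑ k : Fin n, (∑ x ∈ Finset.Ici k, lam x - ∑ x ∈ Finset.Ici k, mu x) = D) →
      mon K n mu ∈ J by
    intro lam h1 h2 h3 h4
    exact H _ lam h1 h2 h3 h4 rfl
  intro D
  induction D using Nat.strong_induction_on with
  | _ D ih =>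
    intro lam hlam hlamJ hsum hdom hD
    by_cases heq : lam = mu
    · exact heq ▸ hlamJ
    -- the largest index where lam and mu differ
    have hFne : (Finset.univ.filter fun k => lam k ≠ mu k).Nonempty := by
      rcases Function.ne_iff.mp heq with ⟨k, hk⟩
      exact ⟨k, by simp [hk]⟩
    set j := (Finset.univ.filter fun k => lam k ≠ mu k).max' hFne with hjdef
    have hjne : lam j ≠ mu j := by
      have := (Finset.univ.filter fun k => lam k ≠ mu k).max'_mem hFne
      simpa using this
    have hjmax : ∀ k, j < k → lam k = mu k := by
      intro k hk
      by_contra hne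
      have : k ≤ j := Finset.le_max' _ _ (by simp [hne])
      exact absurd hk (not_lt.mpr this)
    -- mu j < lam j
    have hioi : ∑ x ∈ Finset.Ioi j, mu x = ∑ x ∈ Finset.Ioi j, lam x := by
      apply Finset.sum_congr rfl
      intro x hx
      exact (hjmax x (Finset.mem_Ioi.mp hx)).symm
    have hICIj : ∑ x ∈ Finset.Ici j, mu x ≤ ∑ x ∈ Finset.Ici j, lam x := hdom j
    have hIcieq : ∀ f : Fin n → ℕ, ∑ x ∈ Finset.Ici j, f x = f j + ∑ x ∈ Finset.Ioi j, f x := by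
      intro f
      have : Finset.Ici j = insert j (Finset.Ioi j) := by
        ext x
        simp only [Finset.mem_Ici, Finset.mem_insert, Finset.mem_Ioi, Fin.le_def, Fin.lt_def,
          Fin.ext_iff]
        omega
      rw [this, Finset.sum_insert (by simp)]
    have hmuj : mu j < lam j := by
      have h1 := hICIj
      rw [hIcieq mu, hIcieq lam] at h1
      omega
    -- total below j is equal
    have hIic : ∑ x ∈ Finset.Iic j, mu x = ∑ x ∈ Finset.Iic j, lam x := by
      have e1 := sum_split_le mu j
      have e2 := sum_split_le lam j
      omega
    -- there is i < j with lam i + 2 ≤ lam j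
    have hex : ∃ i, i < j ∧ lam i + 2 ≤ lam j := by
      by_contra hcon
      push_neg at hcon
      have s1 : ∑ x ∈ Finset.Iic j, mu x ≤ ∑ x ∈ Finset.Iic j, (fun _ => lam j - 1) x := by
        apply Finset.sum_le_sum
        intro x hx
        have : mu x ≤ mu j := hmu (Finset.mem_Iic.mp hx)
        omega
      have s2 : ∑ x ∈ Finset.Iic j, (fun _ => lam j - 1) x < ∑ x ∈ Finset.Iic j, lam x := by
        apply Finset.sum_lt_sum
        · intro x hx
          rcases eq_or_lt_of_le (Finset.mem_Iic.mp hx) with rfl | h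
          · omega
          · have := hcon x h
            omega
        · exact ⟨j, Finset.mem_Iic.mpr le_rfl, by omega⟩
      omega
    have hFine : (Finset.univ.filter fun i => i < j ∧ lam i + 2 ≤ lam j).Nonempty := by
      obtain ⟨i, h1, h2⟩ := hex
      exact ⟨i, by simp [h1, h2]⟩
    set i := (Finset.univ.filter fun i => i < j ∧ lam i + 2 ≤ lam j).max' hFine with hidef
    have hi : i < j ∧ lam i + 2 ≤ lam j := by
      have h := (Finset.univ.filter fun i => i < j ∧ lam i + 2 ≤ lam j).max'_mem hFine
      rw [Finset.mem_filter] at h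
      exact h.2
    have himax : ∀ p, i < p → p < j → lam j ≤ lam p + 1 := by
      intro p hip hpj
      by_contra hc
      push_neg at hc
      have : p ≤ i := Finset.le_max' _ _ (by simp [hpj]; omega)
      exact absurd hip (not_lt.mpr this)
    -- j' : the smallest index with lam j' = lam j
    have hFj'ne : (Finset.univ.filter fun p => lam p = lam j).Nonempty := ⟨j, by simp⟩
    set j' := (Finset.univ.filter fun p => lam p = lam j).min' hFj'ne with hj'def
    have hj' : lam j' = lam j := by
      have := (Finset.univ.filter fun p => lam p = lam j).min'_mem hFj'ne
      simpa using this
    have hj'le : j' ≤ j := Finset.min'_le _ _ (by simp)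
    have hj'min : ∀ p, p < j' → lam p < lam j := by
      intro p hp
      rcases lt_or_ge (lam p) (lam j) with h | h
      · exact h
      · exfalso
        have : lam p = lam j := le_antisymm (hlam (le_trans hp.le hj'le)) h
        have : j' ≤ p := Finset.min'_le _ _ (by simp [this])
        exact absurd hp (not_lt.mpr this)
    have hij' : i < j' := by
      rcases lt_or_ge i j' with h | h
      · exact h
      · exfalso
        have : lam j' ≤ lam i := hlam h
        omega
    -- the Borel move
    set lam' := borelMoveVec n lam i j' with hlam'def
    have hlam'i : lam' i = lam i + 1 := by simp [hlam'def, borelMoveVec]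
    have hlam'j : lam' j' = lam j' - 1 := by
      have h1 : j' ≠ i := ne_of_gt hij'
      simp [hlam'def, borelMoveVec, h1]
    have hlam'o : ∀ x, x ≠ i → x ≠ j' → lam' x = lam x := by
      intro x h1 h2
      simp [hlam'def, borelMoveVec, h1, h2]
    have hlamj1 : 1 ≤ lam j := by omega
    have hmem' : mon K n lam' ∈ J :=
      hJ.2.2 lam hlam hlamJ i j' hij' (by omega)
    -- lam' is monotone
    have hlam'mono : Monotone lam' := by
      intro p q hpq
      rcases eq_or_lt_of_le hpq with rfl | hpq
      · exact le_rfl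
      by_cases hpi : p = i
      · subst hpi
        rw [hlam'i]
        by_cases hqj : q = j'
        · subst hqj; rw [hlam'j]; omega
        · have hqi : q ≠ i := ne_of_gt hpq
          rw [hlam'o q hqi hqj]
          rcases lt_or_ge q j' with h | h
          · have h2 : q < j := lt_of_lt_of_le h hj'le
            have := himax q hpq h2
            omega
          · have : lam j' ≤ lam q := hlam (lt_of_le_of_ne h (Ne.symm hqj)).le
            omega
      · by_cases hpj : p = j'
        · subst hpj
          have hqj : q ≠ j' := ne_of_gt hpq
          have hqi : q ≠ i := by
            intro h; subst h; exact absurd (lt_trans hij' hpq) (lt_irrefl i)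
          rw [hlam'j, hlam'o q hqi hqj]
          have : lam j' ≤ lam q := hlam hpq.le
          omega
        · rw [hlam'o p hpi hpj]
          by_cases hqi : q = i
          · subst hqi
            rw [hlam'i]
            have := hlam hpq.le
            omega
          · by_cases hqj : q = j'
            · subst hqj
              have : lam p < lam j := hj'min p hpq
              rw [hlam'j]
              omega
            · rw [hlam'o q hqi hqj]
              exact hlam hpq.le
    -- sums of lam'
    have hsum' : ∀ S : Finset (Fin n), i ∈ S → j' ∈ S →
        ∑ x ∈ S, lam' x = ∑ x ∈ S, lam x := by
      intro S hiS hjS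
      have := sum_pair_split (f := lam') (g := lam) (ne_of_lt hij') hiS hjS
        (fun x _ h1 h2 => hlam'o x h1 h2)
      omega
    have hsum'' : ∀ S : Finset (Fin n), i ∉ S → j' ∈ S →
        ∑ x ∈ S, lam' x + 1 = ∑ x ∈ S, lam x := by
      intro S hiS hjS
      have := sum_single_split (f := lam') (g := lam) hjS
        (fun x hx h2 => hlam'o x (fun h => hiS (h ▸ hx)) h2)
      omega
    -- strict domination in the middle range
    have hstrict : ∀ k : Fin n, i < k → k ≤ j' →
        ∑ x ∈ Finset.Ici k, mu x < ∑ x ∈ Finset.Ici k, lam x := by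
      intro k hik hkj
      apply Finset.sum_lt_sum
      · intro x hx
        have hkx : k ≤ x := Finset.mem_Ici.mp hx
        rcases lt_trichotomy x j with h | rfl | h
        · have h1 : lam j ≤ lam x + 1 := himax x (lt_of_lt_of_le hik hkx) h
          have h2 : mu x ≤ mu j := hmu h.le
          omega
        · omega
        · exact le_of_eq (hjmax x h).symm
      · exact ⟨j, Finset.mem_Ici.mpr (le_trans hkj hj'le), hmuj⟩
    -- new cut sums
    have hcut : ∀ k : Fin n, ∑ x ∈ Finset.Ici k, mu x ≤ ∑ x ∈ Finset.Ici k, lam' x := by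
      intro k
      by_cases hki : k ≤ i
      · rw [hsum' _ (Finset.mem_Ici.mpr hki) (Finset.mem_Ici.mpr (le_trans hki hij'.le))]
        exact hdom k
      · by_cases hkj : k ≤ j'
        · have h1 := hsum'' (Finset.Ici k) (fun h => hki (Finset.mem_Ici.mp h))
            (Finset.mem_Ici.mpr hkj)
          have h2 := hstrict k (not_le.mp hki) hkj
          omega
        · have : ∑ x ∈ Finset.Ici k, lam' x = ∑ x ∈ Finset.Ici k, lam x := by
            apply Finset.sum_congr rfl
            intro x hx
            have hkx : k ≤ x := Finset.mem_Ici.mp hx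
            apply hlam'o
            · intro h; rw [h] at hkx; exact hki hkx
            · intro h; rw [h] at hkx; exact hkj hkx
          rw [this]; exact hdom k
    -- total sum preserved
    have htot : ∑ x, mu x = ∑ x, lam' x := by
      rw [hsum' Finset.univ (Finset.mem_univ i) (Finset.mem_univ j')]
      exact hsum
    -- measure decreases
    have hmeas : ∑ k : Fin n, (∑ x ∈ Finset.Ici k, lam' x - ∑ x ∈ Finset.Ici k, mu x) < D := by
      rw [← hD]
      apply Finset.sum_lt_sum
      · intro k _
        by_cases hki : k ≤ i
        · rw [hsum' _ (Finset.mem_Ici.mpr hki) (Finset.mem_Ici.mpr (le_trans hki hij'.le))]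
        · by_cases hkj : k ≤ j'
          · have h1 := hsum'' (Finset.Ici k) (fun h => hki (Finset.mem_Ici.mp h))
              (Finset.mem_Ici.mpr hkj)
            omega
          · have : ∑ x ∈ Finset.Ici k, lam' x = ∑ x ∈ Finset.Ici k, lam x := by
              apply Finset.sum_congr rfl
              intro x hx
              have hkx : k ≤ x := Finset.mem_Ici.mp hx
              apply hlam'o
              · intro h; rw [h] at hkx; exact hki hkx
              · intro h; rw [h] at hkx; exact hkj hkx
            rw [this]
      · refine ⟨j', Finset.mem_univ j', ?_⟩
        have h1 := hsum'' (Finset.Ici j') (fun h => absurd (Finset.mem_Ici.mp h) (not_le.mpr hij'))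
          (Finset.mem_Ici.mpr le_rfl)
        have h2 := hstrict j' hij' le_rfl
        omega
    exact ih _ hmeas lam' hlam'mono hmem' htot hcut rfl

end Chain
section Augment

variable {n : ℕ}

/-- `ℓ¹` distance between two exponent vectors. -/
def l1 (x y : Fin n → ℕ) : ℕ := ∑ i, ((x i - y i) + (y i - x i))

lemma sum_tsub_comm {x y : Fin n → ℕ} (h : ∑ i, x i = ∑ i, y i) :
    ∑ i, (x i - y i) = ∑ i, (y i - x i) := by
  have h2 : ∑ i, (x i + (y i - x i)) = ∑ i, (y i + (x i - y i)) :=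
    Finset.sum_congr rfl (fun i _ => by omega)
  rw [Finset.sum_add_distrib, Finset.sum_add_distrib] at h2
  omega

/-- The augmentation property for the "independent vectors" of an exchange family. -/
lemma augmentation {B : Set (Fin n → ℕ)} {d : ℕ}
    (hdeg : ∀ b ∈ B, ∑ i, b i = d)
    (hex : ∀ a ∈ B, ∀ b ∈ B, ∀ i : Fin n, b i < a i →
      ∃ j, a j < b j ∧ borelMoveVec n a j i ∈ B)
    {c c' b b' : Fin n → ℕ} (hb : b ∈ B) (hb' : b' ∈ B)
    (hcb : ∀ k, c k ≤ b k) (hcb' : ∀ k, c' k ≤ b' k)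
    (hlt : ∑ i, c i < ∑ i, c' i) :
    ∃ i, c i < c' i ∧ ∃ b'' ∈ B, (∀ k, c k ≤ b'' k) ∧ c i < b'' i := by
  classical
  set V : Set ℕ := {v | ∃ x ∈ B, (∀ k, c k ≤ x k) ∧ l1 x b' = v} with hV
  have hVne : V.Nonempty := ⟨l1 b b', b, hb, hcb, rfl⟩
  obtain ⟨bs, hbsB, hbsc, hbsl⟩ : ∃ x ∈ B, (∀ k, c k ≤ x k) ∧ l1 x b' = sInf V :=
    Nat.sInf_mem hVne
  by_cases hgood : ∃ i, c i < c' i ∧ c i < bs i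
  · obtain ⟨i, h1, h2⟩ := hgood
    exact ⟨i, h1, bs, hbsB, hbsc, h2⟩
  · exfalso
    push_neg at hgood
    have H1 : ∀ i, c i < c' i → bs i = c i := fun i h =>
      le_antisymm (hgood i h) (hbsc i)
    have H2 : ∀ i, b' i < bs i → bs i = c i := by
      intro i hi
      by_contra hne
      have hci : c i < bs i := lt_of_le_of_ne (hbsc i) (Ne.symm hne)
      obtain ⟨j, hj1, hj2⟩ := hex bs hbsB b' hb' i hi
      set b2 := borelMoveVec n bs j i with hb2def
      have hb2j : b2 j = bs j + 1 := by simp [hb2def, borelMoveVec]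
      have hij : j ≠ i := by
        intro h; rw [h] at hj1; omega
      have hb2i : b2 i = bs i - 1 := by
        simp [hb2def, borelMoveVec, Ne.symm hij]
      have hb2o : ∀ k, k ≠ i → k ≠ j → b2 k = bs k := by
        intro k h1 h2
        simp [hb2def, borelMoveVec, h1, h2]
      have hcb2 : ∀ k, c k ≤ b2 k := by
        intro k
        by_cases h1 : k = i
        · subst h1; omega
        · by_cases h2 : k = j
          · subst h2; rw [hb2j]; exact le_trans (hbsc k) (by omega)
          · rw [hb2o k h1 h2]; exact hbsc k
      have hl1 : l1 b2 b' + 2 = l1 bs b' := by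
        rw [l1, l1]
        have hsplit := sum_pair_split (S := Finset.univ)
          (f := fun k => (b2 k - b' k) + (b' k - b2 k))
          (g := fun k => (bs k - b' k) + (b' k - bs k))
          hij (Finset.mem_univ j) (Finset.mem_univ i)
          (fun x _ h1 h2 => by beta_reduce; rw [hb2o x h2 h1])
        beta_reduce at hsplit
        have hvi : b2 i = bs i - 1 := hb2i
        have hvj : b2 j = bs j + 1 := hb2j
        omega
      have : l1 b2 b' ∈ V := ⟨b2, hj2, hcb2, rfl⟩
      have hge := Nat.sInf_le this
      omega
    -- counting contradiction
    have hsb : ∑ i, bs i = ∑ i, b' i := by rw [hdeg bs hbsB, hdeg b' hb']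
    have e1 : ∑ i, (c' i - c i) ≤ ∑ i, (b' i - bs i) := by
      apply Finset.sum_le_sum
      intro i _
      rcases lt_or_ge (c i) (c' i) with h | h
      · have := H1 i h
        have := hcb' i
        omega
      · omega
    have e2 : ∑ i, (bs i - b' i) ≤ ∑ i, (c i - c' i) := by
      apply Finset.sum_le_sum
      intro i _
      rcases lt_or_ge (b' i) (bs i) with h | h
      · have := H2 i h
        have := hcb' i
        omega
      · omega
    have e3 : ∑ i, (b' i - bs i) = ∑ i, (bs i - b' i) := sum_tsub_comm hsb.symm
    have e4 : ∑ i, (c' i - c i) ≤ ∑ i, (c i - c' i) := by omega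
    have e5 : ∑ i, (c' i + (c i - c' i)) = ∑ i, (c i + (c' i - c i)) :=
      Finset.sum_congr rfl (fun i _ => by omega)
    rw [Finset.sum_add_distrib, Finset.sum_add_distrib] at e5
    omega

end Augment
section Dominant

variable {n : ℕ}

lemma topSum_le_total (m : ℕ) (x : Fin n → ℕ) : topSum m x ≤ ∑ i, x i := by
  apply Finset.sup_le
  intro S _
  exact Finset.sum_le_sum_of_subset (Finset.subset_univ S)

lemma topSum_total (x : Fin n → ℕ) : topSum n x = ∑ i, x i := by
  refine le_antisymm (topSum_le_total n x) ?_
  exact sum_le_topSum (by simp)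

lemma topSum_cap {m : ℕ} (h : n ≤ m) (x : Fin n → ℕ) : topSum m x = ∑ i, x i := by
  refine le_antisymm (topSum_le_total m x) ?_
  rw [← topSum_total]
  exact topSum_mono_m h x

lemma topSum_add_le {D : ℕ} {x : Fin n → ℕ} (hD : ∀ i, x i ≤ D) (m : ℕ) :
    ∀ t, topSum (m + t) x ≤ topSum m x + t * D := by
  intro t
  induction t with
  | zero => simp
  | succ t ih =>
    have h2 := topSum_succ_le (m := m + t) hD
    rw [show m + (t+1) = (m+t)+1 from rfl, show (t+1)*D = t*D + D from by ring]
    omega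

lemma geo_Icc {W : ℕ} (hW : 2 ≤ W) :
    ∀ u s : ℕ, 1 ≤ u → ∑ ℓ ∈ Finset.Icc (s+1) (s+u), W^(s+u-ℓ) + 1 ≤ 2 * W^(u-1) := by
  intro u
  induction u with
  | zero => omega
  | succ u ih =>
    intro s _
    rcases Nat.eq_zero_or_pos u with rfl | hu
    · simp
    · have hins : Finset.Icc (s+1) (s+u+1) = insert (s+u+1) (Finset.Icc (s+1) (s+u)) := by
        ext ℓ
        simp only [Finset.mem_Icc, Finset.mem_insert]
        omega
      have hsum : ∑ ℓ ∈ Finset.Icc (s+1) (s+u+1), W^(s+u+1-ℓ)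
          = 1 + W * ∑ ℓ ∈ Finset.Icc (s+1) (s+u), W^(s+u-ℓ) := by
        rw [hins, Finset.sum_insert (by simp), Finset.mul_sum]
        congr 1
        · simp
        · apply Finset.sum_congr rfl
          intro ℓ hℓ
          rw [Finset.mem_Icc] at hℓ
          rw [show s+u+1-ℓ = (s+u-ℓ)+1 from by omega, pow_succ]
          ring
      have hih := ih s hu
      set X := W ^ (u - 1) with hX
      set S := ∑ ℓ ∈ Finset.Icc (s+1) (s+u), W^(s+u-ℓ) with hS
      have hWu : W ^ u = X * W := by
        rw [hX, ← pow_succ]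
        congr 1
        omega
      have hmul : W * (S + 1) ≤ W * (2 * X) := Nat.mul_le_mul_left _ hih
      have e1 : W * (S + 1) = W * S + W := by ring
      have e2 : W * (2 * X) = 2 * (X * W) := by ring
      have e3 : 2 * W ^ (u + 1 - 1) = 2 * (X * W) := by
        rw [show u + 1 - 1 = u from rfl, hWu]
      rw [show s + (u+1) = s + u + 1 from rfl, hsum, e3]
      omega

/-- In a symmetric equigenerated exchange family, a `Ψ`-maximal sorted element
dominates every member in all top-`m` sums. -/
lemma exists_dominant {B : Set (Fin n → ℕ)} {d : ℕ} (hBne : B.Nonempty)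
    (hdeg : ∀ b ∈ B, ∑ i, b i = d)
    (hperm : ∀ b ∈ B, ∀ σ : Equiv.Perm (Fin n), b ∘ ⇑σ ∈ B)
    (hex : ∀ a ∈ B, ∀ b ∈ B, ∀ i : Fin n, b i < a i →
      ∃ j, a j < b j ∧ borelMoveVec n a j i ∈ B) :
    ∃ lam ∈ B, Monotone lam ∧ ∀ b ∈ B, ∀ m, topSum m b ≤ topSum m lam := by
  classical
  set M := n * d + 3 with hM
  set W := M * M with hW
  have hM3 : 3 ≤ M := by omega
  have hW2 : 2 ≤ W := by
    rw [hW]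
    have := Nat.mul_le_mul hM3 hM3
    omega
  set Ψ : (Fin n → ℕ) → ℕ := fun x => ∑ ℓ ∈ Finset.Icc 1 n, W^(n-ℓ) * topSum ℓ x with hΨ
  have hne' : (Ψ '' B).Nonempty := hBne.image Ψ
  have hbdd : BddAbove (Ψ '' B) := by
    refine ⟨∑ ℓ ∈ Finset.Icc 1 n, W^(n-ℓ) * d, ?_⟩
    rintro v ⟨x, hx, rfl⟩
    apply Finset.sum_le_sum
    intro ℓ _
    exact Nat.mul_le_mul_left _ (le_trans (topSum_le_total _ _) (le_of_eq (hdeg x hx)))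
  obtain ⟨lam0, hlam0B, hlam0⟩ := Nat.sSup_mem hne' hbdd
  set lam := lam0 ∘ ⇑(Tuple.sort lam0) with hlamdef
  have hlamB : lam ∈ B := hperm lam0 hlam0B _
  have hlammono : Monotone lam := Tuple.monotone_sort lam0
  have hΨeq : Ψ lam = Ψ lam0 := by
    rw [hΨ]
    apply Finset.sum_congr rfl
    intro ℓ _
    rw [topSum_perm]
  have hmax : ∀ x ∈ B, Ψ x ≤ Ψ lam := by
    intro x hx
    rw [hΨeq, hlam0]
    exact le_csSup hbdd ⟨x, hx, rfl⟩
  refine ⟨lam, hlamB, hlammono, ?_⟩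
  intro b hbB m
  rcases Nat.eq_zero_or_pos m with rfl | hm1
  · simp [topSum_zero]
  rcases le_or_gt n m with hnm | hmn
  · rw [topSum_cap hnm, topSum_cap hnm, hdeg b hbB, hdeg lam hlamB]
  -- now 1 ≤ m < n
  by_contra hcon
  push_neg at hcon
  have hd1 : 1 ≤ d := by
    have h1 : topSum m b ≤ d := le_trans (topSum_le_total _ _) (le_of_eq (hdeg b hbB))
    omega
  have hnpos : 0 < n := by omega
  set kb : Fin n := ⟨n - m, by omega⟩ with hkb
  have hcard : (Finset.Ici kb).card = m := by
    rw [Fin.card_Ici]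
    simp only [hkb]
    omega
  set c : Fin n → ℕ := fun k => if kb ≤ k then lam k else 0 with hc
  set b1 := b ∘ ⇑(Tuple.sort b) with hb1
  have hb1B : b1 ∈ B := hperm b hbB _
  have hb1mono : Monotone b1 := Tuple.monotone_sort b
  set c' : Fin n → ℕ := fun k => if kb ≤ k then b1 k else 0 with hc'
  have hfilter : Finset.univ.filter (fun k => kb ≤ k) = Finset.Ici kb := by
    ext x
    simp [Finset.mem_Ici]
  have hsum_c : ∑ i, c i = topSum m lam := by
    rw [hc]
    rw [← Finset.sum_filter, hfilter, ← hcard, topSum_sorted hlammono]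
  have hsum_c' : ∑ i, c' i = topSum m b := by
    rw [hc', ← Finset.sum_filter, hfilter, ← topSum_perm m b (Tuple.sort b), ← hb1,
      ← hcard, topSum_sorted hb1mono]
  have hclam : ∀ k, c k ≤ lam k := by
    intro k
    rw [hc]
    by_cases h : kb ≤ k <;> simp [h]
  have hc'b1 : ∀ k, c' k ≤ b1 k := by
    intro k
    rw [hc']
    by_cases h : kb ≤ k <;> simp [h]
  have hlt : ∑ i, c i < ∑ i, c' i := by
    rw [hsum_c, hsum_c']
    exact hcon
  obtain ⟨i, hi1, b'', hb''B, hcb'', hstrict⟩ :=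
    augmentation hdeg hex hlamB hb1B hclam hc'b1 hlt
  have hkbi : kb ≤ i := by
    by_contra h
    rw [hc, hc'] at hi1
    simp [h] at hi1
  have hcIci : ∀ k, kb ≤ k → c k = lam k := by
    intro k h
    rw [hc]
    simp [h]
  -- entrywise bound for lam
  have hentry : ∀ i, lam i ≤ d := by
    intro i
    rw [← hdeg lam hlamB]
    exact Finset.single_le_sum (fun j _ => Nat.zero_le _) (Finset.mem_univ i)
  -- low levels
  have hlow : ∀ ℓ, 1 ≤ ℓ → ℓ ≤ m → topSum ℓ lam ≤ topSum ℓ b'' := by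
    intro ℓ h1 h2
    set kl : Fin n := ⟨n - ℓ, by omega⟩ with hkl
    have hcardl : (Finset.Ici kl).card = ℓ := by
      rw [Fin.card_Ici]
      simp only [hkl]
      omega
    have hkbkl : kb ≤ kl := by
      rw [hkb, hkl, Fin.le_def]
      simp
      omega
    have e1 : topSum ℓ lam = ∑ x ∈ Finset.Ici kl, lam x := by
      rw [← hcardl, topSum_sorted hlammono]
    have e2 : ∑ x ∈ Finset.Ici kl, lam x ≤ ∑ x ∈ Finset.Ici kl, b'' x := by
      apply Finset.sum_le_sum
      intro x hx
      have : kb ≤ x := le_trans hkbkl (Finset.mem_Ici.mp hx)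
      rw [← hcIci x this]
      exact hcb'' x
    rw [e1]
    exact le_trans e2 (sum_le_topSum (le_of_eq hcardl))
  -- strict at level m
  have hmid : topSum m lam + 1 ≤ topSum m b'' := by
    have e1 : topSum m lam = ∑ x ∈ Finset.Ici kb, lam x := by
      rw [← hcard, topSum_sorted hlammono]
    have e2 : ∑ x ∈ Finset.Ici kb, lam x < ∑ x ∈ Finset.Ici kb, b'' x := by
      apply Finset.sum_lt_sum
      · intro x hx
        rw [← hcIci x (Finset.mem_Ici.mp hx)]
        exact hcb'' x
      · refine ⟨i, Finset.mem_Ici.mpr hkbi, ?_⟩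
        rw [← hcIci i hkbi]
        exact hstrict
    rw [e1]
    exact Nat.succ_le_of_lt (lt_of_lt_of_le e2 (sum_le_topSum (le_of_eq hcard)))
  -- high levels
  have hhigh : ∀ ℓ, m < ℓ → topSum ℓ lam ≤ topSum ℓ b'' + (ℓ - m) * d := by
    intro ℓ hℓ
    have h1 : topSum ℓ lam ≤ topSum m lam + (ℓ - m) * d := by
      have := topSum_add_le hentry m (ℓ - m)
      rwa [show m + (ℓ - m) = ℓ from by omega] at this
    have h2 : topSum m b'' ≤ topSum ℓ b'' := topSum_mono_m (by omega) _
    omega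
  -- arithmetic bound
  have harith : ∑ ℓ ∈ Finset.Icc (m+1) n, W^(n-ℓ) * ((ℓ - m) * d) + 1 ≤ W^(n-m) := by
    have hE : ∑ ℓ ∈ Finset.Icc (m+1) n, W^(n-ℓ) * ((ℓ - m) * d)
        ≤ M * ∑ ℓ ∈ Finset.Icc (m+1) n, W^(n-ℓ) := by
      rw [Finset.mul_sum]
      apply Finset.sum_le_sum
      intro ℓ hℓ
      rw [Finset.mem_Icc] at hℓ
      have : (ℓ - m) * d ≤ M := by
        have h3 : ℓ - m ≤ n := by omega
        have h4 : (ℓ - m) * d ≤ n * d := Nat.mul_le_mul_right d h3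
        omega
      calc W^(n-ℓ) * ((ℓ - m) * d) ≤ W^(n-ℓ) * M := Nat.mul_le_mul_left _ this
        _ = M * W^(n-ℓ) := Nat.mul_comm _ _
    have hgeo := geo_Icc hW2 (n - m) m (by omega)
    rw [show m + (n - m) = n from by omega] at hgeo
    set X := W ^ (n - m - 1) with hX
    set S := ∑ ℓ ∈ Finset.Icc (m+1) n, W^(n-ℓ) with hSdef
    have hWu : W ^ (n - m) = X * W := by
      rw [hX, ← pow_succ]
      congr 1
      omega
    have hmul : M * (S + 1) ≤ M * (2 * X) := Nat.mul_le_mul_left _ hgeo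
    have e1 : M * (S + 1) = M * S + M := by ring
    have e2 : M * (2 * X) = 2 * (M * X) := by ring
    have e3 : X * W = M * (M * X) := by rw [hW]; ring
    have hMX : 1 ≤ M * X := Nat.one_le_iff_ne_zero.mpr (by positivity)
    have hM3 : 3 ≤ M := by omega
    have h2MX : 2 * (M * X) ≤ M * (M * X) := Nat.mul_le_mul_right _ (by omega)
    omega
  -- assemble the Ψ comparison
  have hsplit : Finset.Icc 1 n = Finset.Icc 1 m ∪ Finset.Icc (m+1) n := by
    ext ℓ
    simp only [Finset.mem_Icc, Finset.mem_union]
    omega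
  have hdisj : Disjoint (Finset.Icc 1 m) (Finset.Icc (m+1) n) := by
    rw [Finset.disjoint_left]
    intro ℓ h1 h2
    rw [Finset.mem_Icc] at h1 h2
    omega
  have hΨx : ∀ x, Ψ x = ∑ ℓ ∈ Finset.Icc 1 m, W^(n-ℓ) * topSum ℓ x
      + ∑ ℓ ∈ Finset.Icc (m+1) n, W^(n-ℓ) * topSum ℓ x := by
    intro x
    rw [hΨ]
    beta_reduce
    rw [hsplit, Finset.sum_union hdisj]
  have hlowsum : ∑ ℓ ∈ Finset.Icc 1 m, W^(n-ℓ) * topSum ℓ lam + W^(n-m)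
      ≤ ∑ ℓ ∈ Finset.Icc 1 m, W^(n-ℓ) * topSum ℓ b'' := by
    have hstep : ∀ ℓ ∈ Finset.Icc 1 m,
        W^(n-ℓ) * topSum ℓ lam + (if ℓ = m then W^(n-m) else 0)
          ≤ W^(n-ℓ) * topSum ℓ b'' := by
      intro ℓ hℓ
      rw [Finset.mem_Icc] at hℓ
      by_cases h : ℓ = m
      · subst h
        simp only [if_pos rfl]
        calc W^(n-ℓ) * topSum ℓ lam + W^(n-ℓ) = W^(n-ℓ) * (topSum ℓ lam + 1) := by ring
          _ ≤ W^(n-ℓ) * topSum ℓ b'' := Nat.mul_le_mul_left _ hmid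
      · simp only [if_neg h]
        rw [Nat.add_zero]
        exact Nat.mul_le_mul_left _ (hlow ℓ hℓ.1 hℓ.2)
    have := Finset.sum_le_sum hstep
    rw [Finset.sum_add_distrib] at this
    have hif : ∑ ℓ ∈ Finset.Icc 1 m, (if ℓ = m then W^(n-m) else 0) = W^(n-m) := by
      rw [Finset.sum_ite_eq' (Finset.Icc 1 m) m (fun _ => W^(n-m))]
      have hmem : m ∈ Finset.Icc 1 m := Finset.mem_Icc.mpr ⟨hm1, le_rfl⟩
      rw [if_pos hmem]
    rw [hif] at this
    exact this
  have hhighsum : ∑ ℓ ∈ Finset.Icc (m+1) n, W^(n-ℓ) * topSum ℓ lam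
      ≤ ∑ ℓ ∈ Finset.Icc (m+1) n, W^(n-ℓ) * topSum ℓ b''
        + ∑ ℓ ∈ Finset.Icc (m+1) n, W^(n-ℓ) * ((ℓ - m) * d) := by
    rw [← Finset.sum_add_distrib]
    apply Finset.sum_le_sum
    intro ℓ hℓ
    rw [Finset.mem_Icc] at hℓ
    calc W^(n-ℓ) * topSum ℓ lam ≤ W^(n-ℓ) * (topSum ℓ b'' + (ℓ - m) * d) :=
          Nat.mul_le_mul_left _ (hhigh ℓ hℓ.1)
      _ = W^(n-ℓ) * topSum ℓ b'' + W^(n-ℓ) * ((ℓ - m) * d) := by ring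
  have hfinal : Ψ lam + 1 ≤ Ψ b'' := by
    rw [hΨx lam, hΨx b'']
    omega
  have := hmax b'' hb''B
  omega

end Dominant
section Final

variable {n : ℕ}

lemma sum_borelMove {a : Fin n → ℕ} {i j : Fin n} (hne : i ≠ j) (hpos : 0 < a j) :
    ∑ k, borelMoveVec n a i j k = ∑ k, a k := by
  have h := sum_pair_split (S := Finset.univ) (f := borelMoveVec n a i j) (g := a)
    hne (Finset.mem_univ i) (Finset.mem_univ j)
    (fun x _ h1 h2 => by simp [borelMoveVec, h1, h2])
  have hvi : borelMoveVec n a i j i = a i + 1 := by simp [borelMoveVec]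
  have hvj : borelMoveVec n a i j j = a j - 1 := by simp [borelMoveVec, Ne.symm hne]
  omega

lemma bmv_fst (a : Fin n → ℕ) (i j : Fin n) : borelMoveVec n a i j i = a i + 1 := by
  simp [borelMoveVec]

lemma bmv_snd (a : Fin n → ℕ) {i j : Fin n} (h : j ≠ i) : borelMoveVec n a i j j = a j - 1 := by
  simp [borelMoveVec, h]

lemma bmv_other (a : Fin n → ℕ) {i j k : Fin n} (h1 : k ≠ i) (h2 : k ≠ j) :
    borelMoveVec n a i j k = a k := by
  simp [borelMoveVec, h1, h2]

theorem symmetric_polymatroidal_iff_principalBorel' (K : Type) [Field K] (n : ℕ)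
    (I : Ideal (MvPolynomial (Fin n) K))
    (hmono : IsMonomialIdeal K n I) (hsym : IsSymmetricIdeal K n I)
    (hbot : I ≠ ⊥) :
    IsPolymatroidal K n I ↔
      ∃ lam : Fin n → ℕ, Monotone lam ∧ I = Sss K n {lam} := by
  classical
  constructor
  · rintro ⟨hmonoI, ⟨d, hd⟩, hexI⟩
    set B : Set (Fin n → ℕ) := {a | IsMinGen K n I a} with hB
    have hBmem : ∀ a, a ∈ B ↔ IsMinGen K n I a := fun a => Iff.rfl
    have hBne : B.Nonempty := exists_minGen hmono hbot
    have hBdeg : ∀ b ∈ B, ∑ i, b i = d := fun b hb => hd b hb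
    have hBperm : ∀ b ∈ B, ∀ σ : Equiv.Perm (Fin n), b ∘ ⇑σ ∈ B :=
      fun b hb σ => minGen_perm hsym hb σ
    -- Borel moves on minimal generators stay minimal generators
    have hmove : ∀ a ∈ B, ∀ i j : Fin n, a i < a j → borelMoveVec n a i j ∈ B := by
      intro a haB i j hij
      have hne : i ≠ j := by intro h; rw [h] at hij; omega
      set p := a ∘ ⇑(Equiv.swap i j) with hp
      have hpB : p ∈ B := hBperm a haB _
      have hpj : p j = a i := by rw [hp]; simp [Equiv.swap_apply_right]
      obtain ⟨j', hj', hmem⟩ := hexI a p haB hpB j (by rw [hpj]; exact hij)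
      have hj'i : j' = i := by
        by_contra h1
        by_cases h2 : j' = j
        · rw [h2, hpj] at hj'; omega
        · rw [hp] at hj'
          simp only [Function.comp_apply, Equiv.swap_apply_of_ne_of_ne h1 h2] at hj'
          omega
      rw [hj'i] at hmem
      have hsumeq : ∑ k, borelMoveVec n a i j k = d := by
        rw [sum_borelMove hne (by omega)]
        exact hBdeg a haB
      exact minGen_deg hd hmono hmem hsumeq
    -- I is an sssi
    have hIssi : IsSSSI K n I := by
      refine ⟨hmono, hsym, ?_⟩
      intro mu hmumono hmuI i j hij hmuij
      have hji : j ≠ i := Ne.symm (ne_of_lt hij)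
      obtain ⟨a, haB, hale⟩ := exists_minGen_le hmono hmuI
      by_cases hc : a j < mu j
      · apply mon_mem_of_le haB.1
        intro k
        by_cases h1 : k = i
        · rw [h1, bmv_fst]; exact le_trans (hale i) (by omega)
        · by_cases h2 : k = j
          · rw [h2, bmv_snd mu hji]; omega
          · rw [bmv_other mu h1 h2]; exact hale k
      · have haj : a j = mu j := le_antisymm (hale j) (not_lt.mp hc)
        have hai : a i < a j := by
          have := hale i
          omega
        have h3 := hmove a haB i j hai
        apply mon_mem_of_le (h3 : IsMinGen K n I _).1
        intro k
        by_cases h1 : k = i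
        · rw [h1, bmv_fst, bmv_fst]; exact Nat.add_le_add_right (hale i) 1
        · by_cases h2 : k = j
          · rw [h2, bmv_snd a hji, bmv_snd mu hji]; omega
          · rw [bmv_other a h1 h2, bmv_other mu h1 h2]; exact hale k
    -- exchange property inside B
    have hexB : ∀ a ∈ B, ∀ b ∈ B, ∀ i : Fin n, b i < a i →
        ∃ j, a j < b j ∧ borelMoveVec n a j i ∈ B := by
      intro a haB b hbB i hbi
      obtain ⟨j, hj, hmem⟩ := hexI a b haB hbB i hbi
      have hne : j ≠ i := by intro h; rw [h] at hj; omega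
      refine ⟨j, hj, ?_⟩
      have hsumeq : ∑ k, borelMoveVec n a j i k = d := by
        rw [sum_borelMove hne (by omega)]
        exact hBdeg a haB
      exact minGen_deg hd hmono hmem hsumeq
    obtain ⟨lam, hlamB, hlammono, hdom⟩ := exists_dominant hBne hBdeg hBperm hexB
    refine ⟨lam, hlammono, ?_⟩
    apply le_antisymm
    · -- I ≤ every sssi containing mon lam
      apply le_sInf
      rintro J ⟨hJssi, hJlam⟩
      have hmonlamJ : mon K n lam ∈ J := hJlam lam rfl
      apply ideal_le_of_minGen_mem hmono
      intro a haB
      set as := a ∘ ⇑(Tuple.sort a) with has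
      have hasB : as ∈ B := hBperm a haB _
      have hasmono : Monotone as := Tuple.monotone_sort a
      have hsums : ∑ k, as k = ∑ k, lam k := by
        rw [hBdeg as hasB, hBdeg lam hlamB]
      have hcuts : ∀ k : Fin n, ∑ x ∈ Finset.Ici k, as x ≤ ∑ x ∈ Finset.Ici k, lam x := by
        intro k
        rw [← topSum_sorted hasmono k, ← topSum_sorted hlammono k]
        exact hdom as hasB _
      have h1 : mon K n as ∈ J := chain_lemma hJssi hasmono lam hlammono hmonlamJ hsums hcuts
      have h2 : mon K n (as ∘ ⇑(Tuple.sort a)⁻¹) ∈ J := mon_perm_mem hJssi.2.1 h1 _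
      have h3 : as ∘ ⇑(Tuple.sort a)⁻¹ = a := by
        funext k
        simp [has]
      rwa [h3] at h2
    · exact sInf_le ⟨hIssi, fun l hl => by
        rw [Set.mem_singleton_iff] at hl
        subst hl
        exact (hlamB : IsMinGen K n I l).1⟩
  · rintro ⟨lam, hlammono, hI⟩
    set D := ∑ i, lam i with hD
    set Tset : Set (Fin n → ℕ) :=
      {a | ∑ i, a i = D ∧ ∀ m, topSum m a ≤ topSum m lam} with hT
    set J : Ideal (MvPolynomial (Fin n) K) := Ideal.span (mon K n '' Tset) with hJ
    have hlamT : lam ∈ Tset := ⟨rfl, fun m => le_rfl⟩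
    have hTperm : ∀ a ∈ Tset, ∀ σ : Equiv.Perm (Fin n), a ∘ ⇑σ ∈ Tset := by
      intro a ha σ
      refine ⟨?_, fun m => ?_⟩
      · rw [show ∑ i, (a ∘ ⇑σ) i = ∑ i, a (σ i) from rfl, Equiv.sum_comp σ a]
        exact ha.1
      · rw [topSum_perm]
        exact ha.2 m
    -- Borel moves keep us inside Tset
    have hTmove : ∀ t ∈ Tset, ∀ i j : Fin n, t i < t j → borelMoveVec n t i j ∈ Tset := by
      intro t ht i j hij
      have hne : i ≠ j := by intro h; rw [h] at hij; omega
      set t' := borelMoveVec n t i j with ht'def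
      have ht'i : t' i = t i + 1 := by simp [ht'def, borelMoveVec]
      have ht'j : t' j = t j - 1 := by simp [ht'def, borelMoveVec, Ne.symm hne]
      have ht'o : ∀ x, x ≠ i → x ≠ j → t' x = t x := by
        intro x h1 h2
        simp [ht'def, borelMoveVec, h1, h2]
      refine ⟨?_, ?_⟩
      · rw [ht'def, sum_borelMove hne (by omega)]
        exact ht.1
      · intro m
        obtain ⟨S, hScard, hSval⟩ := topSum_spec m t'
        rw [hSval]
        by_cases hiS : i ∈ S
        · by_cases hjS : j ∈ S
          · have hps := sum_pair_split (f := t') (g := t) hne hiS hjS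
              (fun x _ h1 h2 => ht'o x h1 h2)
            have h2 : ∑ x ∈ S, t x ≤ topSum m lam :=
              le_trans (sum_le_topSum hScard) (ht.2 m)
            omega
          · set S' := insert j (S.erase i) with hS'
            have hjS' : j ∉ S.erase i := fun h => hjS (Finset.mem_of_mem_erase h)
            have hcard' : S'.card ≤ m := by
              rw [hS', Finset.card_insert_of_notMem hjS', Finset.card_erase_of_mem hiS]
              have : 0 < S.card := Finset.card_pos.mpr ⟨i, hiS⟩
              omega
            have e1 := sum_single_split (S := S) (f := t') (g := t) hiS
              (fun x hx h1 => ht'o x h1 (fun h2 => hjS (h2 ▸ hx)))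
            have e2 : ∑ x ∈ S', t x = t j + ∑ x ∈ S.erase i, t x := by
              rw [hS', Finset.sum_insert hjS']
            have e3 : ∑ x ∈ S, t x = t i + ∑ x ∈ S.erase i, t x :=
              (Finset.add_sum_erase _ _ hiS).symm
            have h4 : ∑ x ∈ S', t x ≤ topSum m lam :=
              le_trans (sum_le_topSum hcard') (ht.2 m)
            omega
        · by_cases hjS : j ∈ S
          · have e1 := sum_single_split (S := S) (f := t') (g := t) hjS
              (fun x hx h1 => ht'o x (fun h2 => hiS (h2 ▸ hx)) h1)
            have h2 : ∑ x ∈ S, t x ≤ topSum m lam :=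
              le_trans (sum_le_topSum hScard) (ht.2 m)
            omega
          · have e1 : ∑ x ∈ S, t' x = ∑ x ∈ S, t x :=
              Finset.sum_congr rfl
                (fun x hx => ht'o x (fun h => hiS (h ▸ hx)) (fun h => hjS (h ▸ hx)))
            have h2 : ∑ x ∈ S, t x ≤ topSum m lam :=
              le_trans (sum_le_topSum hScard) (ht.2 m)
            omega
    have hJmono : IsMonomialIdeal K n J := ⟨Tset, hJ⟩
    have hJsym : IsSymmetricIdeal K n J := by
      intro σ
      rw [hJ, Ideal.map_span]
      congr 1
      rw [Set.image_image]
      ext x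
      constructor
      · rintro ⟨v, hv, rfl⟩
        exact ⟨v ∘ ⇑σ.symm, hTperm v hv σ.symm, (rename_mon σ v).symm⟩
      · rintro ⟨v, hv, rfl⟩
        refine ⟨v ∘ ⇑σ, hTperm v hv σ, ?_⟩
        beta_reduce
        rw [rename_mon σ (v ∘ ⇑σ)]
        congr 1
        funext k
        simp
    have hJssi : IsSSSI K n J := by
      refine ⟨hJmono, hJsym, ?_⟩
      intro mu hmumono hmuJ i j hij hmuij
      rw [hJ] at hmuJ ⊢
      have hji : j ≠ i := Ne.symm (ne_of_lt hij)
      obtain ⟨t, htT, htle⟩ := mon_mem_span_iff.mp hmuJ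
      by_cases hc : t j < mu j
      · apply mon_mem_span_iff.mpr
        refine ⟨t, htT, fun k => ?_⟩
        by_cases h1 : k = i
        · rw [h1, bmv_fst]; exact le_trans (htle i) (by omega)
        · by_cases h2 : k = j
          · rw [h2, bmv_snd mu hji]; omega
          · rw [bmv_other mu h1 h2]; exact htle k
      · have htj : t j = mu j := le_antisymm (htle j) (not_lt.mp hc)
        have hti : t i < t j := by
          have := htle i
          omega
        apply mon_mem_span_iff.mpr
        refine ⟨borelMoveVec n t i j, hTmove t htT i j hti, fun k => ?_⟩
        by_cases h1 : k = i
        · rw [h1, bmv_fst, bmv_fst]; exact Nat.add_le_add_right (htle i) 1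
        · by_cases h2 : k = j
          · rw [h2, bmv_snd t hji, bmv_snd mu hji]; omega
          · rw [bmv_other t h1 h2, bmv_other mu h1 h2]; exact htle k
    -- minimal generators of J are exactly Tset
    have hminGen : ∀ a, IsMinGen K n J a ↔ a ∈ Tset := by
      intro a
      constructor
      · intro ha
        obtain ⟨t, htT, htle⟩ := mon_mem_span_iff.mp (hJ ▸ ha.1)
        by_cases h : t = a
        · exact h ▸ htT
        · exfalso
          exact ha.2 t htle h (by rw [hJ]; exact Ideal.subset_span ⟨t, htT, rfl⟩)
      · intro haT
        refine ⟨by rw [hJ]; exact Ideal.subset_span ⟨a, haT, rfl⟩, ?_⟩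
        intro b hble hbne hbJ
        obtain ⟨t, htT, htle⟩ := mon_mem_span_iff.mp (hJ ▸ hbJ)
        have h1 : ∑ k, t k ≤ ∑ k, b k := Finset.sum_le_sum (fun k _ => htle k)
        have h2 : ∑ k, b k < ∑ k, a k := sum_lt_of_le_of_ne hble hbne
        have h3 := htT.1
        have h4 := haT.1
        omega
    -- Sss {lam} = J
    have hSssJ : Sss K n {lam} = J := by
      apply le_antisymm
      · exact sInf_le ⟨hJssi, fun l hl => by
          rw [Set.mem_singleton_iff] at hl
          subst hl
          rw [hJ]
          exact Ideal.subset_span ⟨l, hlamT, rfl⟩⟩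
      · apply le_sInf
        rintro J' ⟨hJ'ssi, hJ'lam⟩
        rw [hJ]
        apply Ideal.span_le.mpr
        rintro x ⟨t, htT, rfl⟩
        set ts := t ∘ ⇑(Tuple.sort t) with hts
        have htsmono : Monotone ts := Tuple.monotone_sort t
        have htsT : ts ∈ Tset := hTperm t htT _
        have hsums : ∑ k, ts k = ∑ k, lam k := htsT.1
        have hcuts : ∀ k : Fin n, ∑ x ∈ Finset.Ici k, ts x ≤ ∑ x ∈ Finset.Ici k, lam x := by
          intro k
          rw [← topSum_sorted htsmono k, ← topSum_sorted hlammono k]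
          exact htsT.2 _
        have h1 : mon K n ts ∈ J' :=
          chain_lemma hJ'ssi htsmono lam hlammono (hJ'lam lam rfl) hsums hcuts
        have h2 : mon K n (ts ∘ ⇑(Tuple.sort t)⁻¹) ∈ J' := mon_perm_mem hJ'ssi.2.1 h1 _
        have h3 : ts ∘ ⇑(Tuple.sort t)⁻¹ = t := by
          funext k
          simp [hts]
        rwa [h3] at h2
    have hIJ : I = J := by rw [hI, hSssJ]
    rw [hIJ]
    -- J is polymatroidal
    refine ⟨hJmono, ⟨D, fun a ha => ((hminGen a).mp ha).1⟩, ?_⟩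
    intro a b haM hbM i hbi
    have haT : a ∈ Tset := (hminGen a).mp haM
    have hbT : b ∈ Tset := (hminGen b).mp hbM
    have hfeas : ∀ x ∈ Tset, ∀ S : Finset (Fin n), ∑ k ∈ S, x k ≤ topSum S.card lam :=
      fun x hx S => le_trans (sum_le_topSum le_rfl) (hx.2 _)
    set F := Finset.univ.powerset.filter
      (fun S : Finset (Fin n) => i ∉ S ∧ ∑ x ∈ S, a x = topSum S.card lam) with hF
    set A := F.sup id with hA
    have hbase : i ∉ (⊥ : Finset (Fin n)) ∧
        ∑ x ∈ (⊥ : Finset (Fin n)), a x = topSum (⊥ : Finset (Fin n)).card lam := by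
      constructor
      · simp
      · simp [topSum_zero]
    have hstep : ∀ S1, (i ∉ S1 ∧ ∑ x ∈ S1, a x = topSum S1.card lam) →
        ∀ S2, (i ∉ S2 ∧ ∑ x ∈ S2, a x = topSum S2.card lam) →
        (i ∉ S1 ⊔ S2 ∧ ∑ x ∈ S1 ⊔ S2, a x = topSum (S1 ⊔ S2).card lam) := by
      intro S1 hS1 S2 hS2
      obtain ⟨h1i, h1t⟩ := hS1
      obtain ⟨h2i, h2t⟩ := hS2
      rw [Finset.sup_eq_union]
      constructor
      · intro h
        rcases Finset.mem_union.mp h with h | h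
        · exact h1i h
        · exact h2i h
      · have hsum : ∑ x ∈ S1 ∪ S2, a x + ∑ x ∈ S1 ∩ S2, a x
            = ∑ x ∈ S1, a x + ∑ x ∈ S2, a x := Finset.sum_union_inter
        have hf1 : ∑ x ∈ S1 ∪ S2, a x ≤ topSum (S1 ∪ S2).card lam := hfeas a haT _
        have hf2 : ∑ x ∈ S1 ∩ S2, a x ≤ topSum (S1 ∩ S2).card lam := hfeas a haT _
        have hcard : (S1 ∪ S2).card + (S1 ∩ S2).card = S1.card + S2.card :=
          Finset.card_union_add_card_inter S1 S2
        have hp : (S1 ∩ S2).card ≤ S1.card := Finset.card_le_card Finset.inter_subset_left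
        have hu : S1.card ≤ (S1 ∪ S2).card := Finset.card_le_card Finset.subset_union_left
        have h4 := topSum_four lam ((S1 ∪ S2).card - S1.card) (S1 ∩ S2).card S1.card hp
        rw [show S1.card + ((S1 ∪ S2).card - S1.card) = (S1 ∪ S2).card from by omega,
          show (S1 ∩ S2).card + ((S1 ∪ S2).card - S1.card) = S2.card from by omega] at h4
        omega
    have hmemF : ∀ S ∈ F, (i ∉ id S ∧ ∑ x ∈ id S, a x = topSum (id S).card lam) := by
      intro S hSF
      rw [hF, Finset.mem_filter] at hSF
      exact hSF.2
    have hPA : i ∉ A ∧ ∑ x ∈ A, a x = topSum A.card lam := by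
      rw [hA]
      exact Finset.sup_induction
        (p := fun S : Finset (Fin n) => i ∉ S ∧ ∑ x ∈ S, a x = topSum S.card lam)
        hbase hstep hmemF
    have hsubA : ∀ S : Finset (Fin n), i ∉ S → ∑ x ∈ S, a x = topSum S.card lam → S ⊆ A := by
      intro S h1 h2
      have hmem : S ∈ F := by
        rw [hF, Finset.mem_filter]
        exact ⟨Finset.mem_powerset.mpr (Finset.subset_univ S), h1, h2⟩
      exact Finset.le_sup (f := id) hmem
    have hAble : ∑ x ∈ A, b x ≤ ∑ x ∈ A, a x := by
      rw [hPA.2]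
      exact hfeas b hbT A
    set C := Finset.univ \ insert i A with hC
    have hsplit : ∀ x : Fin n → ℕ, ∑ k, x k = x i + ∑ k ∈ A, x k + ∑ k ∈ C, x k := by
      intro x
      have h1 : ∑ k ∈ insert i A, x k = x i + ∑ k ∈ A, x k := Finset.sum_insert hPA.1
      have h2 : ∑ k ∈ C, x k + ∑ k ∈ insert i A, x k = ∑ k, x k :=
        Finset.sum_sdiff (Finset.subset_univ _)
      omega
    have hCex : ∃ j ∈ C, a j < b j := by
      by_contra hcon
      push_neg at hcon
      have h1 : ∑ k ∈ C, b k ≤ ∑ k ∈ C, a k := Finset.sum_le_sum hcon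
      have h2 := hsplit a
      have h3 := hsplit b
      have h4 : ∑ k, a k = ∑ k, b k := by rw [haT.1, hbT.1]
      omega
    obtain ⟨j, hjC, hjab⟩ := hCex
    have hjmem := Finset.mem_sdiff.mp (hC ▸ hjC)
    have hjA : j ∉ A := fun h => hjmem.2 (Finset.mem_insert_of_mem h)
    have hji : j ≠ i := fun h => hjmem.2 (h ▸ Finset.mem_insert_self i A)
    refine ⟨j, hjab, ?_⟩
    set a' := borelMoveVec n a j i with ha'def
    have ha'j : a' j = a j + 1 := by simp [ha'def, borelMoveVec]
    have ha'i : a' i = a i - 1 := by simp [ha'def, borelMoveVec, Ne.symm hji]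
    have ha'o : ∀ x, x ≠ i → x ≠ j → a' x = a x := by
      intro x h1 h2
      simp [ha'def, borelMoveVec, h2, h1]
    have ha'T : a' ∈ Tset := by
      refine ⟨?_, ?_⟩
      · rw [ha'def, sum_borelMove hji (by omega)]
        exact haT.1
      · intro m
        obtain ⟨S, hScard, hSval⟩ := topSum_spec m a'
        rw [hSval]
        by_cases hjS : j ∈ S
        · by_cases hiS : i ∈ S
          · have hps := sum_pair_split (f := a') (g := a) hji hjS hiS
              (fun x _ h1 h2 => ha'o x h2 h1)
            have h2 : ∑ x ∈ S, a x ≤ topSum m lam :=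
              le_trans (sum_le_topSum hScard) (haT.2 m)
            omega
          · -- S is not tight, so we gain one unit of slack
            have hnt : ∑ x ∈ S, a x < topSum S.card lam := by
              rcases lt_or_eq_of_le (hfeas a haT S) with h | h
              · exact h
              · exfalso
                exact hjA (hsubA S hiS h hjS)
            have e1 := sum_single_split (S := S) (f := a') (g := a) hjS
              (fun x hx h1 => ha'o x (fun h2 => hiS (h2 ▸ hx)) h1)
            have h2 : topSum S.card lam ≤ topSum m lam := topSum_mono_m hScard lam
            omega
        · by_cases hiS : i ∈ S
          · have e1 := sum_single_split (S := S) (f := a') (g := a) hiS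
              (fun x hx h1 => ha'o x h1 (fun h2 => hjS (h2 ▸ hx)))
            have h2 : ∑ x ∈ S, a x ≤ topSum m lam :=
              le_trans (sum_le_topSum hScard) (haT.2 m)
            omega
          · have e1 : ∑ x ∈ S, a' x = ∑ x ∈ S, a x :=
              Finset.sum_congr rfl
                (fun x hx => ha'o x (fun h => hiS (h ▸ hx)) (fun h => hjS (h ▸ hx)))
            have h2 : ∑ x ∈ S, a x ≤ topSum m lam :=
              le_trans (sum_le_topSum hScard) (haT.2 m)
            omega
    rw [hJ]
    exact Ideal.subset_span ⟨a', ha'T, rfl⟩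

end Final


/-- A nonzero symmetric monomial ideal is polymatroidal if and only if it is a
principal Borel symmetric strongly shifted ideal, i.e. `I = Sss({λ})` for some
partition `λ`. -/
theorem symmetric_polymatroidal_iff_principalBorel (K : Type) [Field K] (n : ℕ)
    (I : Ideal (MvPolynomial (Fin n) K))
    (hmono : IsMonomialIdeal K n I) (hsym : IsSymmetricIdeal K n I)
    (hbot : I ≠ ⊥) :
    IsPolymatroidal K n I ↔
      ∃ lam : Fin n → ℕ, Monotone lam ∧ I = Sss K n {lam} :=
  symmetric_polymatroidal_iff_principalBorel' K n I hmono hsym hbot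
end

section
/- Let λ = (λ_1,...,λ_n) be a partition and a_j = λ_1 + ... + λ_j. Then the principal Borel symmetric strongly shifted ideal Sss({λ}) admits the decomposition Sss({λ}) = ∩_{j=1}^n ∩_{σ ∈ 𝔖_n} σ((x_1,...,x_j))^{a_j}. -/
open MvPolynomial

/-! ### Auxiliary material for the proof -/

namespace SssAux

open Finset

variable {K : Type} [Field K] {n : ℕ}

/-! #### Basic facts about `mon` -/

lemma symm_add (a b : Fin n → ℕ) :
    Finsupp.equivFunOnFinite.symm (a + b)
      = Finsupp.equivFunOnFinite.symm a + Finsupp.equivFunOnFinite.symm b := by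
  ext i; rfl

lemma mon_mul (a b : Fin n → ℕ) : mon K n a * mon K n b = mon K n (a + b) := by
  rw [mon, mon, mon, monomial_mul, one_mul, symm_add]

lemma support_mon (a : Fin n → ℕ) :
    (mon K n a).support = {Finsupp.equivFunOnFinite.symm a} := by
  classical
  rw [mon, support_monomial, if_neg (one_ne_zero (α := K))]

lemma rename_mon (π : Equiv.Perm (Fin n)) (a : Fin n → ℕ) :
    rename (⇑π) (mon K n a) = mon K n (a ∘ ⇑π⁻¹) := by
  rw [mon, rename_monomial, mon]
  have h : Finsupp.mapDomain (⇑π) (Finsupp.equivFunOnFinite.symm a)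
      = Finsupp.equivFunOnFinite.symm (a ∘ ⇑π⁻¹) := by
    ext t
    rw [Finsupp.mapDomain_equiv_apply (f := π)]
    rfl
  rw [h]

/-! #### Powers of the ideal generated by a set of variables -/

lemma monomial_mem_pow (S : Finset (Fin n)) (m : ℕ) (d : Fin n →₀ ℕ) (c : K)
    (h : m ≤ ∑ i ∈ S, d i) :
    monomial d c ∈ (Ideal.span (X '' (S : Set (Fin n))) : Ideal (MvPolynomial (Fin n) K)) ^ m := by
  induction m generalizing d with
  | zero => simp
  | succ m ih =>
    obtain ⟨i, hiS, hdi⟩ : ∃ i ∈ S, 0 < d i := by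
      by_contra hc
      push_neg at hc
      have : ∑ i ∈ S, d i = 0 := Finset.sum_eq_zero fun i hi => Nat.le_zero.mp (hc i hi)
      omega
    have hsum : ∑ t ∈ S, d t = d i + ∑ t ∈ S.erase i, d t := (Finset.add_sum_erase _ _ hiS).symm
    have hd : d = (d - Finsupp.single i 1) + Finsupp.single i 1 := by
      ext t
      simp only [Finsupp.coe_add, Finsupp.coe_tsub, Pi.add_apply, Pi.sub_apply]
      rcases eq_or_ne t i with rfl | ht
      · simp; omega
      · simp [Finsupp.single_apply, ht.symm, Ne.symm ht]
    have hkey : monomial d c = monomial (d - Finsupp.single i 1 : Fin n →₀ ℕ) c * X i := by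
      rw [X, monomial_mul, mul_one]
      exact congrArg (fun e => monomial e c) hd
    have hsub : m ≤ ∑ t ∈ S, (d - Finsupp.single i 1 : Fin n →₀ ℕ) t := by
      have h1 : ∑ t ∈ S, (d - Finsupp.single i 1 : Fin n →₀ ℕ) t
          = (d i - 1) + ∑ t ∈ S.erase i, d t := by
        rw [← Finset.add_sum_erase _ _ hiS]
        congr 1
        · simp [Finsupp.tsub_apply]
        · exact Finset.sum_congr rfl fun t ht => by
            simp [Finsupp.tsub_apply, Finsupp.single_apply, Ne.symm (Finset.ne_of_mem_erase ht)]
      omega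
    rw [hkey, pow_succ]
    exact Ideal.mul_mem_mul (ih (d - Finsupp.single i 1) hsub) (Ideal.subset_span ⟨i, hiS, rfl⟩)

def wIdeal (K : Type) [Field K] (n : ℕ) (S : Finset (Fin n)) (m : ℕ) :
    Ideal (MvPolynomial (Fin n) K) where
  carrier := {f | ∀ d ∈ f.support, m ≤ ∑ i ∈ S, d i}
  add_mem' := by
    intro f g hf hg d hd
    rcases Finset.mem_union.mp (MvPolynomial.support_add hd) with h | h
    exacts [hf d h, hg d h]
  zero_mem' := by simp
  smul_mem' := by
    intro c f hf d hd
    rw [smul_eq_mul] at hd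
    obtain ⟨dc, hdc, df, hdf, rfl⟩ := Finset.mem_add.mp (MvPolynomial.support_mul _ _ hd)
    calc m ≤ ∑ i ∈ S, df i := hf df hdf
    _ ≤ ∑ i ∈ S, (dc + df) i := Finset.sum_le_sum (by intro i _; simp)

lemma pow_le_wIdeal (S : Finset (Fin n)) (m : ℕ) :
    (Ideal.span (X '' (S : Set (Fin n))) : Ideal (MvPolynomial (Fin n) K)) ^ m
      ≤ wIdeal K n S m := by
  induction m with
  | zero => intro f _ d _; exact Nat.zero_le _
  | succ m ih =>
    rw [pow_succ]
    rw [Ideal.mul_le]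
    intro r hr s hs d hd
    obtain ⟨dr, hdr, ds, hds, rfl⟩ := Finset.mem_add.mp (MvPolynomial.support_mul _ _ hd)
    have h1 : m ≤ ∑ i ∈ S, dr i := ih hr dr hdr
    have h2 : 1 ≤ ∑ i ∈ S, ds i := by
      have hsw : s ∈ wIdeal K n S 1 := by
        revert hs
        refine fun hs => Ideal.span_le.mpr ?_ hs
        rintro f ⟨i, hiS, rfl⟩ d hd
        rw [support_X] at hd
        rw [Finset.mem_singleton] at hd
        subst hd
        rw [Finset.sum_eq_single_of_mem i hiS (fun t _ ht => Finsupp.single_eq_of_ne' (Ne.symm ht))]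
        simp
      exact hsw ds hds
    have h3 : ∑ i ∈ S, (dr + ds) i = ∑ i ∈ S, dr i + ∑ i ∈ S, ds i := by
      simp [Finset.sum_add_distrib]
    show m + 1 ≤ ∑ i ∈ S, (dr + ds) i
    omega

lemma mem_pow_iff (S : Finset (Fin n)) (m : ℕ) (f : MvPolynomial (Fin n) K) :
    f ∈ (Ideal.span (X '' (S : Set (Fin n))) : Ideal (MvPolynomial (Fin n) K)) ^ m
      ↔ ∀ d ∈ f.support, m ≤ ∑ i ∈ S, d i := by
  constructor
  · exact fun h => pow_le_wIdeal S m h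
  · intro h
    rw [← MvPolynomial.support_sum_monomial_coeff f]
    exact Ideal.sum_mem _ fun d hd => monomial_mem_pow S m d _ (h d hd)

/-! #### The dominance condition `condB` and the right-hand-side ideal -/

/-- The condition for a monomial with exponent vector `b` to lie in the
intersection ideal. -/
def condB (n : ℕ) (lam b : Fin n → ℕ) : Prop :=
  ∀ (j : Fin n) (σ : Equiv.Perm (Fin n)),
    ∑ i ∈ Finset.Iic j, lam i ≤ ∑ i ∈ Finset.Iic j, b (σ i)

/-- The right-hand side of the theorem. -/
noncomputable def RHSI (K : Type) [Field K] (n : ℕ) (lam : Fin n → ℕ) :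
    Ideal (MvPolynomial (Fin n) K) :=
  ⨅ (j : Fin n), ⨅ (σ : Equiv.Perm (Fin n)),
    (Ideal.span {f : MvPolynomial (Fin n) K |
        ∃ i : Fin n, i ≤ j ∧ f = X (σ i)}) ^ (∑ i ∈ Finset.Iic j, lam i)

lemma gen_set_eq (j : Fin n) (σ : Equiv.Perm (Fin n)) :
    {f : MvPolynomial (Fin n) K | ∃ i : Fin n, i ≤ j ∧ f = X (σ i)}
      = X '' (((Finset.Iic j).image σ : Finset (Fin n)) : Set (Fin n)) := by
  ext f
  simp only [Set.mem_setOf_eq, Set.mem_image, Finset.coe_image, Finset.coe_Iic,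
    Set.mem_image, Set.mem_Iic]
  constructor
  · rintro ⟨i, hi, rfl⟩; exact ⟨σ i, ⟨i, hi, rfl⟩, rfl⟩
  · rintro ⟨y, ⟨i, hi, rfl⟩, rfl⟩; exact ⟨i, hi, rfl⟩

lemma sum_image_perm (σ : Equiv.Perm (Fin n)) (j : Fin n) (d : Fin n → ℕ) :
    ∑ i ∈ (Finset.Iic j).image σ, d i = ∑ i ∈ Finset.Iic j, d (σ i) :=
  Finset.sum_image fun _ _ _ _ h => σ.injective h

lemma mem_RHSI_iff (lam : Fin n → ℕ) (f : MvPolynomial (Fin n) K) :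
    f ∈ RHSI K n lam ↔ ∀ d ∈ f.support, condB n lam ⇑d := by
  simp only [RHSI, Ideal.mem_iInf, gen_set_eq, mem_pow_iff, sum_image_perm, condB]
  constructor
  · intro h d hd j σ; exact h j σ d hd
  · intro h j σ d hd; exact h d hd j σ

lemma mon_mem_RHSI_iff (lam b : Fin n → ℕ) :
    mon K n b ∈ RHSI K n lam ↔ condB n lam b := by
  rw [mem_RHSI_iff, support_mon]
  constructor
  · intro h; exact h _ (Finset.mem_singleton_self _)
  · intro h d hd
    rw [Finset.mem_singleton] at hd
    subst hd
    exact h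

/-! #### Combinatorial lemmas about `condB` -/

lemma sum_le_sum_of_downward (μ : Fin n → ℕ) (hμ : Monotone μ) :
    ∀ (c : ℕ) (s T : Finset (Fin n)), s.card = c →
      (∀ x ∈ s, ∀ y, y ≤ x → y ∈ s) → s.card ≤ T.card →
      ∑ i ∈ s, μ i ≤ ∑ i ∈ T, μ i := by
  intro c
  induction c with
  | zero =>
    intro s T hc _ _
    rw [Finset.card_eq_zero.mp hc]
    simp
  | succ c ih =>
    intro s T hc hdc hcard
    have hs : s.Nonempty := Finset.card_pos.mp (by omega)
    have hT : T.Nonempty := Finset.card_pos.mp (by omega)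
    set a := s.max' hs with ha
    set b := T.max' hT with hb
    have hab : a ≤ b := by
      by_contra hba
      push_neg at hba
      have h1 : Finset.Iic b ⊆ s := fun y hy =>
        hdc a (s.max'_mem hs) y (le_of_lt (lt_of_le_of_lt (Finset.mem_Iic.mp hy) hba))
      have h2 : T ⊆ Finset.Iic b := fun t ht => Finset.mem_Iic.mpr (T.le_max' t ht)
      have h3 : insert a (Finset.Iic b) ⊆ s :=
        Finset.insert_subset (s.max'_mem hs) h1
      have h4 : a ∉ Finset.Iic b := by
        rw [Finset.mem_Iic]; exact not_le.mpr hba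
      have h5 := Finset.card_le_card h3
      rw [Finset.card_insert_of_notMem h4] at h5
      have h6 := Finset.card_le_card h2
      omega
    have hrec := ih (s.erase a) (T.erase b)
      (by rw [Finset.card_erase_of_mem (s.max'_mem hs)]; omega)
      (by
        intro x hx y hy
        have hxs := Finset.mem_of_mem_erase hx
        have hxa : x ≠ a := Finset.ne_of_mem_erase hx
        have hxlta : x < a := lt_of_le_of_ne (s.le_max' x hxs) hxa
        exact Finset.mem_erase.mpr ⟨ne_of_lt (lt_of_le_of_lt hy hxlta), hdc x hxs y hy⟩)
      (by
        rw [Finset.card_erase_of_mem (s.max'_mem hs),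
          Finset.card_erase_of_mem (T.max'_mem hT)]
        omega)
    calc ∑ i ∈ s, μ i = μ a + ∑ i ∈ s.erase a, μ i :=
          (Finset.add_sum_erase _ _ (s.max'_mem hs)).symm
    _ ≤ μ b + ∑ i ∈ T.erase b, μ i := add_le_add (hμ hab) hrec
    _ = ∑ i ∈ T, μ i := Finset.add_sum_erase _ _ (T.max'_mem hT)

lemma sum_Iic_le_comp_perm (μ : Fin n → ℕ) (hμ : Monotone μ) (j : Fin n)
    (σ : Equiv.Perm (Fin n)) :
    ∑ i ∈ Finset.Iic j, μ i ≤ ∑ i ∈ Finset.Iic j, μ (σ i) := by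
  rw [← Finset.sum_image (fun x _ y _ h => σ.injective h)]
  exact sum_le_sum_of_downward μ hμ _ _ _ rfl
    (fun x hx y hy => Finset.mem_Iic.mpr (le_trans hy (Finset.mem_Iic.mp hx)))
    (le_of_eq (Finset.card_image_of_injective _ σ.injective).symm)

lemma condB_self (lam : Fin n → ℕ) (hlam : Monotone lam) : condB n lam lam :=
  fun j σ => sum_Iic_le_comp_perm lam hlam j σ

lemma condB_comp_perm (lam b : Fin n → ℕ) (π : Equiv.Perm (Fin n)) :
    condB n lam (b ∘ ⇑π) ↔ condB n lam b := by
  constructor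
  · intro h j σ
    have := h j (π⁻¹ * σ)
    simpa using this
  · intro h j σ
    have := h j (π * σ)
    simpa using this

lemma condB_borel (lam ν : Fin n → ℕ) (h : condB n lam ν) (i j : Fin n)
    (hij : i ≠ j) (hlt : ν i < ν j) : condB n lam (borelMoveVec n ν i j) := by
  intro k σ
  set b := borelMoveVec n ν i j with hb
  have hbi : b i = ν i + 1 := by simp [hb, borelMoveVec]
  have hbj : b j = ν j - 1 := by simp [hb, borelMoveVec, Ne.symm hij]
  have hbo : ∀ x, x ≠ i → x ≠ j → b x = ν x := by
    intro x h1 h2; simp [hb, borelMoveVec, h1, h2]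
  by_cases hq : σ⁻¹ j ∈ Finset.Iic k
  · by_cases hp : σ⁻¹ i ∈ Finset.Iic k
    · have hsum : ∑ t ∈ Finset.Iic k, b (σ t) = ∑ t ∈ Finset.Iic k, ν (σ t) := by
        have hne : σ⁻¹ i ≠ σ⁻¹ j := fun hc => hij (by
          have := congrArg σ hc; simpa using this)
        have hpe : σ⁻¹ i ∈ (Finset.Iic k).erase (σ⁻¹ j) := Finset.mem_erase.mpr ⟨hne, hp⟩
        rw [← Finset.add_sum_erase _ (fun t => b (σ t)) hq,
            ← Finset.add_sum_erase _ (fun t => b (σ t)) hpe,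
            ← Finset.add_sum_erase _ (fun t => ν (σ t)) hq,
            ← Finset.add_sum_erase _ (fun t => ν (σ t)) hpe]
        have h3 : ∑ t ∈ ((Finset.Iic k).erase (σ⁻¹ j)).erase (σ⁻¹ i), b (σ t)
            = ∑ t ∈ ((Finset.Iic k).erase (σ⁻¹ j)).erase (σ⁻¹ i), ν (σ t) := by
          refine Finset.sum_congr rfl fun t ht => ?_
          have hti : t ≠ σ⁻¹ i := Finset.ne_of_mem_erase ht
          have htj : t ≠ σ⁻¹ j := Finset.ne_of_mem_erase (Finset.mem_of_mem_erase ht)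
          exact hbo (σ t) (fun hc => hti (by rw [← hc]; simp))
            (fun hc => htj (by rw [← hc]; simp))
        rw [show σ (σ⁻¹ i) = i from σ.apply_symm_apply i, show σ (σ⁻¹ j) = j from σ.apply_symm_apply j]
        rw [hbi, hbj, h3]
        omega
      rw [hsum]; exact h k σ
    · have key : ∀ t ∈ Finset.Iic k, ν ((σ.trans (Equiv.swap i j)) t) ≤ b (σ t) := by
        intro t ht
        have hti : σ t ≠ i := fun hc => hp (by rw [← hc]; simpa using ht)
        rcases eq_or_ne (σ t) j with hc | hc
        · simp only [Equiv.trans_apply, hc, Equiv.swap_apply_right, hbj]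
          omega
        · have hsw : (Equiv.swap i j) (σ t) = σ t := Equiv.swap_apply_of_ne_of_ne hti hc
          simp only [Equiv.trans_apply, hsw]
          rw [hbo (σ t) hti hc]
      calc ∑ t ∈ Finset.Iic k, lam t ≤ ∑ t ∈ Finset.Iic k, ν ((σ.trans (Equiv.swap i j)) t) :=
            h k (σ.trans (Equiv.swap i j))
      _ ≤ ∑ t ∈ Finset.Iic k, b (σ t) := Finset.sum_le_sum key
  · have key : ∀ t ∈ Finset.Iic k, ν (σ t) ≤ b (σ t) := by
      intro t ht
      have htj : σ t ≠ j := fun hc => hq (by rw [← hc]; simpa using ht)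
      rcases eq_or_ne (σ t) i with hc | hc
      · rw [hc, hbi, ← hc]; omega
      · rw [hbo (σ t) hc htj]
    exact le_trans (h k σ) (Finset.sum_le_sum key)

/-! #### `RHSI` is a symmetric strongly shifted ideal -/

lemma RHSI_eq_span (lam : Fin n → ℕ) :
    RHSI K n lam = Ideal.span (mon K n '' {b | condB n lam b}) := by
  apply le_antisymm
  · intro f hf
    rw [mem_RHSI_iff] at hf
    rw [← MvPolynomial.support_sum_monomial_coeff f]
    refine Ideal.sum_mem _ fun d hd => ?_
    have key : (monomial d (coeff d f) : MvPolynomial (Fin n) K)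
        = C (coeff d f) * mon K n ⇑d := by
      rw [mon, Finsupp.equivFunOnFinite_symm_coe, C_mul_monomial, mul_one]
    rw [key]
    exact Ideal.mul_mem_left _ _ (Ideal.subset_span ⟨⇑d, hf d hd, rfl⟩)
  · rw [Ideal.span_le]
    rintro f ⟨b, hb, rfl⟩
    rw [SetLike.mem_coe, mon_mem_RHSI_iff]
    exact hb

lemma RHSI_symmetric (lam : Fin n → ℕ) : IsSymmetricIdeal K n (RHSI K n lam) := by
  intro π
  rw [RHSI_eq_span, Ideal.map_span]
  have himg : ⇑(rename (R := K) ⇑π) '' (mon K n '' {b | condB n lam b})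
      = mon K n '' {b | condB n lam b} := by
    ext f
    constructor
    · rintro ⟨g, ⟨b, hb, rfl⟩, rfl⟩
      refine ⟨b ∘ ⇑π⁻¹, ?_, (rename_mon π b).symm⟩
      exact (condB_comp_perm lam b π⁻¹).mpr hb
    · rintro ⟨b, hb, rfl⟩
      refine ⟨mon K n (b ∘ ⇑π), ⟨b ∘ ⇑π, (condB_comp_perm lam b π).mpr hb, rfl⟩, ?_⟩
      rw [rename_mon]
      congr 1
      funext t
      simp
  rw [himg, ← RHSI_eq_span]

lemma RHSI_isSSSI (lam : Fin n → ℕ) : IsSSSI K n (RHSI K n lam) := by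
  refine ⟨⟨{b | condB n lam b}, RHSI_eq_span lam⟩, RHSI_symmetric lam, ?_⟩
  intro ν hν hmem i j hij hlt
  rw [mon_mem_RHSI_iff] at hmem ⊢
  exact condB_borel lam ν hmem i j (ne_of_lt hij) hlt

/-! #### Prefix sums over `Fin n` -/

lemma sum_Iic_bot (μ : Fin n → ℕ) (k : Fin n) (hk : k.val = 0) :
    ∑ i ∈ Finset.Iic k, μ i = μ k := by
  have : Finset.Iic k = {k} := by
    ext x
    simp only [Finset.mem_Iic, Finset.mem_singleton, Fin.le_def, Fin.ext_iff]
    omega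
  rw [this, Finset.sum_singleton]

lemma sum_Iic_succ (μ : Fin n → ℕ) (k l : Fin n) (h : l.val = k.val + 1) :
    ∑ i ∈ Finset.Iic l, μ i = ∑ i ∈ Finset.Iic k, μ i + μ l := by
  have hins : Finset.Iic l = insert l (Finset.Iic k) := by
    ext x
    simp only [Finset.mem_Iic, Finset.mem_insert, Fin.le_def, Fin.ext_iff]
    omega
  have hnot : l ∉ Finset.Iic k := by
    simp only [Finset.mem_Iic, Fin.le_def]
    omega
  rw [hins, Finset.sum_insert hnot, add_comm]

lemma eq_of_prefix_eq (μ ν : Fin n → ℕ)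
    (h : ∀ k, ∑ i ∈ Finset.Iic k, μ i = ∑ i ∈ Finset.Iic k, ν i) : μ = ν := by
  funext k
  rcases Nat.eq_zero_or_pos k.val with hk | hk
  · have h1 := sum_Iic_bot μ k hk
    have h2 := sum_Iic_bot ν k hk
    have := h k
    omega
  · set k' : Fin n := ⟨k.val - 1, by omega⟩ with hk'
    have hkk' : k.val = k'.val + 1 := by simp [hk']; omega
    have h1 := sum_Iic_succ μ k' k hkk'
    have h2 := sum_Iic_succ ν k' k hkk'
    have h3 := h k
    have h4 := h k'
    omega


/-- helper: sum over `Iic k` of a function modified at one point inside -/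
lemma sum_modify_mem (μ : Fin n → ℕ) (i k : Fin n) (v : ℕ) (hik : i ≤ k) :
    ∑ t ∈ Finset.Iic k, (fun t => if t = i then v else μ t) t
      = v + ∑ t ∈ (Finset.Iic k).erase i, μ t := by
  have hi : i ∈ Finset.Iic k := Finset.mem_Iic.mpr hik
  rw [← Finset.add_sum_erase _ _ hi]
  simp only [if_pos rfl]
  congr 1
  exact Finset.sum_congr rfl fun t ht => if_neg (Finset.ne_of_mem_erase ht)

lemma sum_erase_formula (μ : Fin n → ℕ) (i k : Fin n) (hik : i ≤ k) :
    ∑ t ∈ Finset.Iic k, μ t = μ i + ∑ t ∈ (Finset.Iic k).erase i, μ t :=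
  (Finset.add_sum_erase _ _ (Finset.mem_Iic.mpr hik)).symm

/-- The main lemma: every monomial whose (monotone) exponent vector has prefix
sums dominating those of `lam` lies in each sssi `J` containing `x^lam`. -/
lemma main_dom (J : Ideal (MvPolynomial (Fin n) K)) (hJ : IsSSSI K n J)
    (lam : Fin n → ℕ) (hlam : Monotone lam) (hlamJ : mon K n lam ∈ J) :
    ∀ (N : ℕ) (μ : Fin n → ℕ), Monotone μ →
      (∀ k : Fin n, ∑ i ∈ Finset.Iic k, lam i ≤ ∑ i ∈ Finset.Iic k, μ i) →
      (∑ k : Fin n, ∑ i ∈ Finset.Iic k, μ i) = N → mon K n μ ∈ J := by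
  intro N
  induction N using Nat.strong_induction_on with
  | _ N ih =>
  intro μ hμ hdom hN
  by_cases hall : ∀ k : Fin n, ∑ i ∈ Finset.Iic k, μ i = ∑ i ∈ Finset.Iic k, lam i
  · have : μ = lam := eq_of_prefix_eq μ lam hall
    subst this
    exact hlamJ
  · push_neg at hall
    obtain ⟨w, hw⟩ := hall
    have hn : 0 < n := w.pos
    set last : Fin n := ⟨n - 1, by omega⟩ with hlast
    have hle_last : ∀ k : Fin n, k ≤ last := by
      intro k
      have := k.isLt
      simp only [Fin.le_def, hlast]
      omega
    -- abbreviations (as plain sums)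
    rcases (hdom last).lt_or_eq with hBig | hEq
    · -- Case B : the total degree is too big; divide by a variable.
      obtain ⟨i, hipos, hprev, hstr⟩ :
          ∃ i : Fin n, 0 < μ i ∧ (∀ t, t < i → μ t < μ i) ∧
            (∀ k, i ≤ k → ∑ s ∈ Finset.Iic k, lam s < ∑ s ∈ Finset.Iic k, μ s) := by
        set Tset := Finset.univ.filter
          (fun k : Fin n => ∑ s ∈ Finset.Iic k, μ s = ∑ s ∈ Finset.Iic k, lam s) with hTset
        by_cases hT : Tset.Nonempty
        · set k0 := Tset.max' hT with hk0
          have hk0mem : k0 ∈ Tset := Tset.max'_mem hT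
          have hk0eq : ∑ s ∈ Finset.Iic k0, μ s = ∑ s ∈ Finset.Iic k0, lam s :=
            (Finset.mem_filter.mp hk0mem).2
          have hk0last : k0 ≠ last := by
            intro hc
            rw [hc] at hk0eq
            omega
          have hk0lt : k0.val + 1 < n := by
            have h1 := k0.isLt
            have : k0.val ≠ n - 1 := fun hc => hk0last (Fin.ext (by simp [hlast, hc]))
            omega
          set i : Fin n := ⟨k0.val + 1, hk0lt⟩ with hi
          have hk0i : k0.val + 1 = i.val := rfl
          have hstr : ∀ k, i ≤ k → ∑ s ∈ Finset.Iic k, lam s < ∑ s ∈ Finset.Iic k, μ s := by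
            intro k hik
            have hne : ∑ s ∈ Finset.Iic k, μ s ≠ ∑ s ∈ Finset.Iic k, lam s := by
              intro hc
              have hkT : k ∈ Tset := Finset.mem_filter.mpr ⟨Finset.mem_univ _, hc⟩
              have := Tset.le_max' k hkT
              rw [← hk0] at this
              have h1 : k.val ≤ k0.val := this
              have h2 : i.val ≤ k.val := hik
              simp only [hi] at h2
              omega
            exact lt_of_le_of_ne (hdom k) (fun hc => hne hc.symm)
          have hμi : lam i < μ i := by
            have h1 := sum_Iic_succ μ k0 i rfl
            have h2 := sum_Iic_succ lam k0 i rfl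
            have h3 := hstr i (le_refl i)
            omega
          have hμk0 : μ k0 ≤ lam k0 := by
            rcases Nat.eq_zero_or_pos k0.val with hz | hz
            · have h1 := sum_Iic_bot μ k0 hz
              have h2 := sum_Iic_bot lam k0 hz
              omega
            · set k0' : Fin n := ⟨k0.val - 1, by omega⟩ with hk0'
              have hsucc : k0.val = k0'.val + 1 := by simp [hk0']; omega
              have h1 := sum_Iic_succ μ k0' k0 hsucc
              have h2 := sum_Iic_succ lam k0' k0 hsucc
              have h3 := hdom k0'
              omega
          refine ⟨i, by omega, ?_, hstr⟩
          intro t ht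
          have htk0 : t ≤ k0 := by
            have h1 : t.val < i.val := ht
            simp only [hi] at h1
            exact Fin.le_def.mpr (by omega)
          have hk0le : k0 ≤ i := Fin.le_def.mpr (by simp [hi])
          calc μ t ≤ μ k0 := hμ htk0
          _ ≤ lam k0 := hμk0
          _ ≤ lam i := hlam hk0le
          _ < μ i := hμi
        · -- no tight index: take i = 0
          have hstr : ∀ k : Fin n, ∑ s ∈ Finset.Iic k, lam s < ∑ s ∈ Finset.Iic k, μ s := by
            intro k2
            refine lt_of_le_of_ne (hdom k2) fun hc => ?_
            exact hT ⟨k2, Finset.mem_filter.mpr ⟨Finset.mem_univ _, hc.symm⟩⟩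
          set i : Fin n := ⟨0, hn⟩ with hi
          refine ⟨i, ?_, ?_, fun k _ => hstr k⟩
          · have h1 := sum_Iic_bot μ i rfl
            have := hstr i
            omega
          · intro t ht
            have h0 : t.val < (0:ℕ) := by simpa [hi] using Fin.lt_def.mp ht
            omega
      -- now decrement μ at i
      set μ' : Fin n → ℕ := fun t => if t = i then μ i - 1 else μ t with hμ'
      have hμ'i : μ' i = μ i - 1 := by simp [hμ']
      have hμ'o : ∀ t, t ≠ i → μ' t = μ t := fun t ht => by simp [hμ', ht]
      have hμ'mono : Monotone μ' := by
        intro a b hab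
        by_cases ha : a = i
        · by_cases hb2 : b = i
          · rw [ha, hb2]
          · rw [ha, hμ'i, hμ'o b hb2]
            have h2 : μ i ≤ μ b := hμ (ha ▸ hab)
            omega
        · by_cases hb2 : b = i
          · rw [hb2, hμ'i, hμ'o a ha]
            have h3 : a < i := lt_of_le_of_ne (hb2 ▸ hab) (fun hc => ha hc)
            have := hprev a h3
            omega
          · rw [hμ'o a ha, hμ'o b hb2]
            exact hμ hab
      have hpre : ∀ k : Fin n, i ≤ k →
          ∑ t ∈ Finset.Iic k, μ' t + 1 = ∑ t ∈ Finset.Iic k, μ t := by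
        intro k hik
        rw [sum_modify_mem μ i k _ hik, sum_erase_formula μ i k hik]
        omega
      have hpre2 : ∀ k : Fin n, ¬ i ≤ k →
          ∑ t ∈ Finset.Iic k, μ' t = ∑ t ∈ Finset.Iic k, μ t := by
        intro k hik
        refine Finset.sum_congr rfl fun t ht => ?_
        have : t ≤ k := Finset.mem_Iic.mp ht
        exact hμ'o t (fun hc => hik (hc ▸ this))
      have hdom' : ∀ k : Fin n, ∑ s ∈ Finset.Iic k, lam s ≤ ∑ s ∈ Finset.Iic k, μ' s := by
        intro k
        by_cases hik : i ≤ k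
        · have := hpre k hik
          have := hstr k hik
          omega
        · rw [hpre2 k hik]
          exact hdom k
      have hmeas : (∑ k : Fin n, ∑ s ∈ Finset.Iic k, μ' s) < N := by
        rw [← hN]
        refine Finset.sum_lt_sum (fun k _ => ?_) ⟨last, Finset.mem_univ _, ?_⟩
        · by_cases hik : i ≤ k
          · have := hpre k hik; omega
          · rw [hpre2 k hik]
        · have := hpre last (hle_last i); omega
      have hmem' : mon K n μ' ∈ J := ih _ hmeas μ' hμ'mono hdom' rfl
      have hfact : mon K n μ = mon K n (fun t => if t = i then 1 else 0) * mon K n μ' := by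
        rw [mon_mul]
        congr 1
        funext t
        rcases eq_or_ne t i with rfl | ht
        · simp [hμ'i]; omega
        · simp [ht, hμ'o t ht]
      rw [hfact]
      exact Ideal.mul_mem_left _ _ hmem'
    · -- Case C : total degree equal; use a Borel move.
      have hwlt : ∑ s ∈ Finset.Iic w, lam s < ∑ s ∈ Finset.Iic w, μ s :=
        lt_of_le_of_ne (hdom w) (fun hc => hw hc.symm)
      set Kset := Finset.univ.filter
        (fun k : Fin n => ∑ s ∈ Finset.Iic k, lam s < ∑ s ∈ Finset.Iic k, μ s) with hKset
      have hKne : Kset.Nonempty := ⟨w, Finset.mem_filter.mpr ⟨Finset.mem_univ _, hwlt⟩⟩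
      set k : Fin n := Kset.min' hKne with hk
      have hkmem : k ∈ Kset := Kset.min'_mem hKne
      have hklt : ∑ s ∈ Finset.Iic k, lam s < ∑ s ∈ Finset.Iic k, μ s :=
        (Finset.mem_filter.mp hkmem).2
      have hkmin : ∀ t, t < k → ∑ s ∈ Finset.Iic t, μ s = ∑ s ∈ Finset.Iic t, lam s := by
        intro t ht
        by_contra hne
        have hlt2 : ∑ s ∈ Finset.Iic t, lam s < ∑ s ∈ Finset.Iic t, μ s :=
          lt_of_le_of_ne (hdom t) (fun hc => hne hc.symm)
        exact absurd (Kset.min'_le t (Finset.mem_filter.mpr ⟨Finset.mem_univ _, hlt2⟩))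
          (not_le.mpr ht)
      have hklast : k ≠ last := by
        intro hc
        rw [hc] at hklt
        omega
      have hkval : k.val < n - 1 := by
        have h1 := k.isLt
        have : k.val ≠ n - 1 := fun hc => hklast (Fin.ext (by simp [hlast, hc]))
        omega
      set Jset := Finset.univ.filter
        (fun t : Fin n => k < t ∧ ∑ s ∈ Finset.Iic t, μ s = ∑ s ∈ Finset.Iic t, lam s)
        with hJset
      have hJne : Jset.Nonempty := by
        refine ⟨last, Finset.mem_filter.mpr ⟨Finset.mem_univ _, ?_, hEq.symm⟩⟩
        exact lt_of_le_of_ne (hle_last k) hklast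
      set j : Fin n := Jset.min' hJne with hj
      have hjmem : j ∈ Jset := Jset.min'_mem hJne
      have hkj : k < j := (Finset.mem_filter.mp hjmem).2.1
      have hjeq : ∑ s ∈ Finset.Iic j, μ s = ∑ s ∈ Finset.Iic j, lam s :=
        (Finset.mem_filter.mp hjmem).2.2
      have hmid : ∀ t, k ≤ t → t < j →
          ∑ s ∈ Finset.Iic t, lam s < ∑ s ∈ Finset.Iic t, μ s := by
        intro t hkt htj
        rcases eq_or_lt_of_le hkt with rfl | hlt2
        · exact hklt
        · have hmemf : (∑ s ∈ Finset.Iic t, μ s = ∑ s ∈ Finset.Iic t, lam s) → False := by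
            intro hc
            exact absurd (Jset.min'_le t (Finset.mem_filter.mpr ⟨Finset.mem_univ _, hlt2, hc⟩))
              (not_le.mpr htj)
          have := hdom t
          rcases Nat.lt_or_ge (∑ s ∈ Finset.Iic t, lam s) (∑ s ∈ Finset.Iic t, μ s) with h | h
          · exact h
          · exact absurd (by omega : ∑ s ∈ Finset.Iic t, μ s = ∑ s ∈ Finset.Iic t, lam s) hmemf
      -- pivotal values
      have hjpos : 0 < j.val := lt_of_le_of_lt (Nat.zero_le _) hkj
      set j' : Fin n := ⟨j.val - 1, by omega⟩ with hj'
      have hj'succ : j.val = j'.val + 1 := by simp [hj']; omega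
      have hkj' : k ≤ j' := by
        have : k.val < j.val := hkj
        exact Fin.le_def.mpr (by simp [hj']; omega)
      have hj'j : j' < j := by
        rw [Fin.lt_def]
        omega
      have hμj : μ j < lam j := by
        have h1 := sum_Iic_succ μ j' j hj'succ
        have h2 := sum_Iic_succ lam j' j hj'succ
        have h3 := hmid j' hkj' hj'j
        omega
      have hμk : lam k < μ k := by
        rcases Nat.eq_zero_or_pos k.val with hz | hz
        · have h1 := sum_Iic_bot μ k hz
          have h2 := sum_Iic_bot lam k hz
          omega
        · set k' : Fin n := ⟨k.val - 1, by omega⟩ with hk'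
          have hsucc : k.val = k'.val + 1 := by simp [hk']; omega
          have h1 := sum_Iic_succ μ k' k hsucc
          have h2 := sum_Iic_succ lam k' k hsucc
          have h3 := hkmin k' (by rw [Fin.lt_def]; omega)
          omega
      have hprevk : ∀ t, t < k → μ t ≤ lam t := by
        intro t ht
        rcases Nat.eq_zero_or_pos t.val with hz | hz
        · have h1 := sum_Iic_bot μ t hz
          have h2 := sum_Iic_bot lam t hz
          have := hkmin t ht
          omega
        · set t' : Fin n := ⟨t.val - 1, by omega⟩ with ht'
          have hsucc : t.val = t'.val + 1 := by simp [ht']; omega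
          have h1 := sum_Iic_succ μ t' t hsucc
          have h2 := sum_Iic_succ lam t' t hsucc
          have h3 := hkmin t ht
          have h4 := hkmin t' (lt_trans (by rw [Fin.lt_def]; omega) ht)
          omega
      have hsuccj : ∀ t, j < t → μ j + 1 ≤ μ t := by
        intro t hjt
        have hlt2 : j.val + 1 ≤ t.val := hjt
        have hsjlt : j.val + 1 < n := lt_of_le_of_lt hlt2 t.isLt
        set sj : Fin n := ⟨j.val + 1, hsjlt⟩ with hsj
        have h1 := sum_Iic_succ μ j sj rfl
        have h2 := sum_Iic_succ lam j sj rfl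
        have h3 := hdom sj
        have h4 : μ sj ≥ lam sj := by omega
        have h5 : lam j ≤ lam sj := hlam (le_of_lt (Fin.lt_def.mpr (by simp [hsj])))
        have h6 : μ sj ≤ μ t := hμ (Fin.le_def.mpr hlt2)
        omega
      -- the new vector
      have hkjne : k ≠ j := ne_of_lt hkj
      set μ' : Fin n → ℕ := fun t => if t = k then μ k - 1 else if t = j then μ j + 1 else μ t
        with hμ'
      have hμ'k : μ' k = μ k - 1 := by simp [hμ']
      have hμ'j : μ' j = μ j + 1 := by simp [hμ', Ne.symm hkjne]
      have hμ'o : ∀ t, t ≠ k → t ≠ j → μ' t = μ t := fun t h1 h2 => by simp [hμ', h1, h2]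
      have hμ'mono : Monotone μ' := by
        intro a b hab
        rcases eq_or_lt_of_le hab with rfl | hab'
        · exact le_refl _
        rcases eq_or_ne b k with rfl | hbk
        · -- b = k : a < k
          have hak : a ≠ k := ne_of_lt hab'
          have haj : a ≠ j := ne_of_lt (lt_trans hab' hkj)
          rw [hμ'k, hμ'o a hak haj]
          have h1 := hprevk a hab'
          have h2 : lam a ≤ lam k := hlam (le_of_lt hab')
          omega
        rcases eq_or_ne b j with rfl | hbj
        · -- b = j
          rw [hμ'j]
          rcases eq_or_ne a k with rfl | hak
          · rw [hμ'k]
            have := hμ (le_of_lt hkj)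
            omega
          · rw [hμ'o a hak (ne_of_lt hab')]
            have := hμ hab
            omega
        · -- b ∉ {k, j}
          rw [hμ'o b hbk hbj]
          rcases eq_or_ne a k with rfl | hak
          · rw [hμ'k]
            have := hμ hab
            omega
          rcases eq_or_ne a j with haj | haj
          · rw [haj, hμ'j]
            exact hsuccj b (haj ▸ hab')
          · rw [hμ'o a hak haj]
            exact hμ hab

      -- prefix sums of μ'
      have hpre1 : ∀ t : Fin n, t < k →
          ∑ s ∈ Finset.Iic t, μ' s = ∑ s ∈ Finset.Iic t, μ s := by
        intro t ht
        refine Finset.sum_congr rfl fun s hs => ?_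
        have hsk : s < k := lt_of_le_of_lt (Finset.mem_Iic.mp hs) ht
        exact hμ'o s (ne_of_lt hsk) (ne_of_lt (lt_trans hsk hkj))
      have hpre2 : ∀ t : Fin n, k ≤ t → t < j →
          ∑ s ∈ Finset.Iic t, μ' s + 1 = ∑ s ∈ Finset.Iic t, μ s := by
        intro t hkt htj
        rw [sum_erase_formula μ' k t hkt, sum_erase_formula μ k t hkt, hμ'k]
        have heq : ∑ s ∈ (Finset.Iic t).erase k, μ' s = ∑ s ∈ (Finset.Iic t).erase k, μ s := by
          refine Finset.sum_congr rfl fun s hs => ?_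
          have h1 : s ≠ k := Finset.ne_of_mem_erase hs
          have h2 : s ≠ j := by
            have := Finset.mem_Iic.mp (Finset.mem_of_mem_erase hs)
            exact ne_of_lt (lt_of_le_of_lt this htj)
          exact hμ'o s h1 h2
        omega
      have hpre3 : ∀ t : Fin n, j ≤ t →
          ∑ s ∈ Finset.Iic t, μ' s = ∑ s ∈ Finset.Iic t, μ s := by
        intro t hjt
        have hkt : k ≤ t := le_trans (le_of_lt hkj) hjt
        have hjmem2 : j ∈ (Finset.Iic t).erase k :=
          Finset.mem_erase.mpr ⟨Ne.symm hkjne, Finset.mem_Iic.mpr hjt⟩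
        rw [sum_erase_formula μ' k t hkt, sum_erase_formula μ k t hkt,
          ← Finset.add_sum_erase _ μ' hjmem2, ← Finset.add_sum_erase _ μ hjmem2]
        have heq : ∑ s ∈ ((Finset.Iic t).erase k).erase j, μ' s
            = ∑ s ∈ ((Finset.Iic t).erase k).erase j, μ s := by
          refine Finset.sum_congr rfl fun s hs => ?_
          exact hμ'o s (Finset.ne_of_mem_erase (Finset.mem_of_mem_erase hs))
            (Finset.ne_of_mem_erase hs)
        rw [hμ'k, hμ'j, heq]
        omega
      have hdom' : ∀ t : Fin n, ∑ s ∈ Finset.Iic t, lam s ≤ ∑ s ∈ Finset.Iic t, μ' s := by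
        intro t
        rcases lt_or_ge t k with h | h
        · rw [hpre1 t h]; exact hdom t
        · rcases lt_or_ge t j with h2 | h2
          · have ha := hpre2 t h h2
            have hb2 := hmid t h h2
            omega
          · rw [hpre3 t h2]; exact hdom t
      have hmeas : (∑ t : Fin n, ∑ s ∈ Finset.Iic t, μ' s) < N := by
        rw [← hN]
        refine Finset.sum_lt_sum (fun t _ => ?_) ⟨k, Finset.mem_univ _, ?_⟩
        · rcases lt_or_ge t k with h | h
          · rw [hpre1 t h]
          · rcases lt_or_ge t j with h2 | h2
            · have := hpre2 t h h2; omega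
            · rw [hpre3 t h2]
        · have := hpre2 k (le_refl k) hkj; omega
      have hmem' : mon K n μ' ∈ J := ih _ hmeas μ' hμ'mono hdom' rfl
      have hborel := hJ.2.2 μ' hμ'mono hmem' k j hkj (by
        rw [hμ'k, hμ'j]
        have := hμ (le_of_lt hkj)
        omega)
      have hfin : borelMoveVec n μ' k j = μ := by
        funext t
        simp only [borelMoveVec]
        rcases eq_or_ne t k with rfl | htk
        · rw [if_pos rfl, hμ'k]
          omega
        · rw [if_neg htk]
          rcases eq_or_ne t j with rfl | htj
          · rw [if_pos rfl, hμ'j]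
            omega
          · rw [if_neg htj, hμ'o t htk htj]
      rw [← hfin]
      exact hborel


lemma Sss_eq (lam : Fin n → ℕ) (hlam : Monotone lam) :
    Sss K n {lam} = RHSI K n lam := by
  apply le_antisymm
  · apply sInf_le
    refine ⟨RHSI_isSSSI lam, ?_⟩
    intro l hl
    rw [Set.mem_singleton_iff] at hl
    rw [hl, mon_mem_RHSI_iff]
    exact condB_self lam hlam
  · apply le_sInf
    rintro J ⟨hJ, hJlam⟩
    rw [RHSI_eq_span, Ideal.span_le]
    rintro f ⟨b, hb, rfl⟩
    set π := Tuple.sort b with hπ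
    have hmono : Monotone (b ∘ ⇑π) := Tuple.monotone_sort b
    have hdomμ : ∀ k : Fin n, ∑ i ∈ Finset.Iic k, lam i ≤ ∑ i ∈ Finset.Iic k, (b ∘ ⇑π) i :=
      fun k => hb k π
    have hμJ : mon K n (b ∘ ⇑π) ∈ J :=
      main_dom J hJ lam hlam (hJlam lam rfl) _ (b ∘ ⇑π) hmono hdomμ rfl
    have hrw : mon K n b = rename (⇑π) (mon K n (b ∘ ⇑π)) := by
      rw [rename_mon]
      congr 1
      funext t
      simp
    rw [SetLike.mem_coe, hrw, ← hJ.2.1 π]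
    exact Ideal.mem_map_of_mem _ hμJ

end SssAux

/-- For a partition `λ = (λ_1,…,λ_n)` with partial sums `a_j = λ_1 + ⋯ + λ_j`,
the principal Borel symmetric strongly shifted ideal `Sss({λ})` decomposes as
the intersection `∩_{j=1}^n ∩_{σ ∈ 𝔖_n} σ((x_1,…,x_j))^{a_j}`. -/
theorem principalBorel_primary_decomposition (K : Type) [Field K] (n : ℕ)
    (lam : Fin n → ℕ) (hlam : Monotone lam) :
    Sss K n {lam} =
      ⨅ (j : Fin n), ⨅ (σ : Equiv.Perm (Fin n)),
        (Ideal.span {f : MvPolynomial (Fin n) K |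
            ∃ i : Fin n, i ≤ j ∧ f = X (σ i)}) ^ (∑ i ∈ Finset.Iic j, lam i) := by
  exact SssAux.Sss_eq lam hlam
end

section
/- Let I be a symmetric strongly shifted ideal of K[x_1,...,x_n] and 1 ≤ c ≤ n. Then the saturation I : I_{n,c}^∞ equals the ideal generated by all σ(x^μ) with σ ∈ 𝔖_n and μ ∈ P_n such that (μ_1,...,μ_{c−1}) = (λ_1,...,λ_{c−1}) for some λ ∈ P(I); moreover this saturation is symmetric strongly shifted. -/
open MvPolynomial

/-- The square-free Veronese ideal `I_{n,c}`, generated by all square-free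
monomials of degree `n − c + 1`. -/
noncomputable def vero (K : Type) [Field K] (n c : ℕ) :
    Ideal (MvPolynomial (Fin n) K) :=
  Ideal.span (mon K n '' {a | (∀ i, a i ≤ 1) ∧ ∑ i, a i = n - c + 1})


namespace SatAux
variable {K : Type} [Field K] {n : ℕ}

noncomputable def fs {n : ℕ} (a : Fin n → ℕ) : Fin n →₀ ℕ := Finsupp.equivFunOnFinite.symm a

@[simp] lemma fs_apply (a : Fin n → ℕ) (i : Fin n) : fs a i = a i := rfl

lemma fs_add (a b : Fin n → ℕ) : fs (a + b) = fs a + fs b := by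
  ext i; simp

lemma fs_smul (N : ℕ) (a : Fin n → ℕ) : fs (N • a) = N • fs a :=
  Finsupp.ext (fun i => by rw [Finsupp.smul_apply]; rfl)

lemma mon_eq (a : Fin n → ℕ) : mon K n a = monomial (fs a) 1 := rfl

lemma mon_mul (a b : Fin n → ℕ) : mon K n a * mon K n b = mon K n (a + b) := by
  simp [mon_eq, monomial_mul, fs_add]

lemma mon_pow (a : Fin n → ℕ) (N : ℕ) : mon K n a ^ N = mon K n (N • a) := by
  rw [mon_eq, mon_eq, monomial_pow, one_pow, fs_smul]

lemma rename_mon (σ : Equiv.Perm (Fin n)) (a : Fin n → ℕ) :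
    rename (σ : Fin n → Fin n) (mon K n a) = mon K n (a ∘ ⇑σ.symm) := by
  rw [mon_eq, rename_monomial, mon_eq]
  have h : Finsupp.mapDomain (σ : Fin n → Fin n) (fs a) = fs (a ∘ ⇑σ.symm) := by
    ext i
    rw [Finsupp.mapDomain_equiv_apply]
    simp [fs]
  rw [h]

lemma support_mon (a : Fin n → ℕ) : (mon K n a).support = {fs a} := by
  classical
  rw [mon_eq, support_monomial, if_neg one_ne_zero]

lemma mem_span_mon_iff (S : Set (Fin n → ℕ)) (f : MvPolynomial (Fin n) K) :
    f ∈ Ideal.span (mon K n '' S) ↔ ∀ d ∈ f.support, ∃ s ∈ S, ∀ t, s t ≤ d t := by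
  have himg : mon K n '' S = (fun xs => monomial xs (1:K)) '' (fs '' S) := by
    rw [Set.image_image]; rfl
  rw [himg, mem_ideal_span_monomial_image]
  constructor
  · intro h d hd
    obtain ⟨si, ⟨s, hs, rfl⟩, hle⟩ := h d hd
    exact ⟨s, hs, fun t => by simpa using Finsupp.le_def.mp hle t⟩
  · intro h d hd
    obtain ⟨s, hs, hle⟩ := h d hd
    exact ⟨fs s, ⟨s, hs, rfl⟩, Finsupp.le_def.mpr (by simpa using hle)⟩

lemma mon_mem_span_iff (S : Set (Fin n → ℕ)) (a : Fin n → ℕ) :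
    mon K n a ∈ Ideal.span (mon K n '' S) ↔ ∃ s ∈ S, ∀ t, s t ≤ a t := by
  rw [mem_span_mon_iff, support_mon]
  simp

lemma mon_dvd_mem {I : Ideal (MvPolynomial (Fin n) K)} {s a : Fin n → ℕ}
    (hs : mon K n s ∈ I) (hle : ∀ t, s t ≤ a t) : mon K n a ∈ I := by
  have : mon K n a = mon K n (fun t => a t - s t) * mon K n s := by
    rw [mon_mul]
    congr 1
    funext t
    simp [Nat.sub_add_cancel (hle t)]
  rw [this]
  exact Ideal.mul_mem_left _ _ hs


def L {n : ℕ} (a : Fin n → ℕ) (k : ℕ) : ℕ := ∑ i : Fin n, if (i:ℕ) < k then a i else 0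

lemma L_zero (a : Fin n → ℕ) : L a 0 = 0 := by simp [L]

lemma L_succ (a : Fin n → ℕ) {k : ℕ} (h : k < n) : L a (k+1) = L a k + a ⟨k, h⟩ := by
  have key : ∀ i : Fin n, (if (i:ℕ) < k+1 then a i else 0)
      = (if (i:ℕ) < k then a i else 0) + (if i = ⟨k,h⟩ then a i else 0) := by
    intro i
    rcases eq_or_ne i ⟨k,h⟩ with rfl | hne
    · simp
    · have hik : (i:ℕ) ≠ k := fun hh => hne (Fin.ext hh)
      rw [if_neg hne]
      by_cases h2 : (i:ℕ) < k
      · rw [if_pos h2, if_pos (by omega), add_zero]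
      · rw [if_neg h2, if_neg (by omega), add_zero]
  calc L a (k+1) = ∑ i : Fin n, ((if (i:ℕ) < k then a i else 0) + (if i = ⟨k,h⟩ then a i else 0)) :=
        Finset.sum_congr rfl (fun i _ => key i)
    _ = L a k + a ⟨k,h⟩ := by
        rw [Finset.sum_add_distrib, Finset.sum_ite_eq' Finset.univ (⟨k,h⟩ : Fin n) a,
          if_pos (Finset.mem_univ _)]
        rfl

lemma L_congr {a b : Fin n → ℕ} {k : ℕ} (h : ∀ t : Fin n, (t:ℕ) < k → a t = b t) :
    L a k = L b k := by
  refine Finset.sum_congr rfl (fun i _ => ?_)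
  by_cases hik : (i:ℕ) < k
  · rw [if_pos hik, if_pos hik, h i hik]
  · rw [if_neg hik, if_neg hik]

lemma L_le_of_pointwise {a b : Fin n → ℕ} {k : ℕ} (h : ∀ t : Fin n, (t:ℕ) < k → a t ≤ b t) :
    L a k ≤ L b k := by
  refine Finset.sum_le_sum (fun i _ => ?_)
  by_cases hik : (i:ℕ) < k
  · rw [if_pos hik, if_pos hik]; exact h i hik
  · rw [if_neg hik, if_neg hik]

lemma L_le_total (a : Fin n → ℕ) (k : ℕ) : L a k ≤ ∑ i, a i := by
  refine Finset.sum_le_sum (fun i _ => ?_)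
  by_cases hik : (i:ℕ) < k
  · rw [if_pos hik]
  · rw [if_neg hik]; exact Nat.zero_le _

lemma L_eq_total {a : Fin n → ℕ} {k : ℕ} (h : n ≤ k) : L a k = ∑ i, a i := by
  refine Finset.sum_congr rfl (fun i _ => if_pos (lt_of_lt_of_le i.isLt h))

lemma card_le_of_max {S : Finset (Fin n)} {m : Fin n} (hm : ∀ t ∈ S, t ≤ m) :
    S.card ≤ (m:ℕ) + 1 := by
  have himg : S.image Fin.val ⊆ Finset.range ((m:ℕ)+1) := by
    intro t ht
    simp only [Finset.mem_image] at ht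
    obtain ⟨x, hx, rfl⟩ := ht
    simp only [Finset.mem_range]
    exact Nat.lt_succ_of_le (hm x hx)
  calc S.card = (S.image Fin.val).card := (Finset.card_image_of_injective S Fin.val_injective).symm
    _ ≤ ((m:ℕ)+1) := le_trans (Finset.card_le_card himg) (le_of_eq (Finset.card_range _))

lemma lowSum_le_sum {a : Fin n → ℕ} (ha : Monotone a) :
    ∀ (k : ℕ) (S : Finset (Fin n)), S.card = k → L a k ≤ ∑ t ∈ S, a t := by
  intro k
  induction k with
  | zero => intro S h; simp [L_zero]
  | succ k ih =>
    intro S hS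
    have hne : S.Nonempty := by rw [← Finset.card_pos, hS]; omega
    have hmS : S.max' hne ∈ S := S.max'_mem hne
    set m := S.max' hne with hm
    have hcard : (S.erase m).card = k := by
      rw [Finset.card_erase_of_mem hmS, hS]
      omega
    have hkn : k < n := by
      have h1 := S.card_le_univ
      rw [hS, Fintype.card_fin] at h1
      omega
    have hkm : k ≤ (m:ℕ) := by
      have hb := card_le_of_max (S := S) (m := m) (fun t ht => S.le_max' t ht)
      omega
    have hmono : a ⟨k, hkn⟩ ≤ a m := ha (by rw [Fin.le_def]; exact hkm)
    calc L a (k+1) = L a k + a ⟨k, hkn⟩ := L_succ a hkn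
      _ ≤ (∑ t ∈ S.erase m, a t) + a m := Nat.add_le_add (ih _ hcard) hmono
      _ = ∑ t ∈ S, a t := Finset.sum_erase_add S a hmS

lemma robinHood {a : Fin n → ℕ} (ha : Monotone a) {i j : Fin n} (hij : i < j)
    (haij : a i < a j) (S : Finset (Fin n)) :
    L a S.card ≤ ∑ t ∈ S, borelMoveVec n a i j t := by
  have hne : i ≠ j := ne_of_lt hij
  have hbge : ∀ t : Fin n, t ≠ j → a t ≤ borelMoveVec n a i j t := by
    intro t ht
    unfold borelMoveVec
    by_cases h1 : t = i
    · rw [if_pos h1]; omega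
    · rw [if_neg h1, if_neg ht]
  by_cases hjS : j ∈ S
  · by_cases hiS : i ∈ S
    · -- both in S : sum is preserved
      have hjE : j ∈ S.erase i := Finset.mem_erase.mpr ⟨(Ne.symm hne), hjS⟩
      have e1 : ∑ t ∈ S, borelMoveVec n a i j t
          = borelMoveVec n a i j i + (borelMoveVec n a i j j + ∑ t ∈ (S.erase i).erase j, borelMoveVec n a i j t) := by
        rw [Finset.add_sum_erase _ _ hjE, Finset.add_sum_erase _ _ hiS]
      have e2 : ∑ t ∈ S, a t = a i + (a j + ∑ t ∈ (S.erase i).erase j, a t) := by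
        rw [Finset.add_sum_erase _ _ hjE, Finset.add_sum_erase _ _ hiS]
      have e3 : ∑ t ∈ (S.erase i).erase j, borelMoveVec n a i j t = ∑ t ∈ (S.erase i).erase j, a t := by
        refine Finset.sum_congr rfl (fun t ht => ?_)
        simp only [Finset.mem_erase] at ht
        unfold borelMoveVec
        rw [if_neg ht.2.1, if_neg ht.1]
      have hi1 : borelMoveVec n a i j i = a i + 1 := by unfold borelMoveVec; rw [if_pos rfl]
      have hj1 : borelMoveVec n a i j j = a j - 1 := by
        unfold borelMoveVec; rw [if_neg (Ne.symm hne), if_pos rfl]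
      have : ∑ t ∈ S, borelMoveVec n a i j t = ∑ t ∈ S, a t := by
        rw [e1, e2, e3, hi1, hj1]; omega
      rw [this]
      exact lowSum_le_sum ha S.card S rfl
    · -- j ∈ S, i ∉ S : exchange
      have hiE : i ∉ S.erase j := fun h => hiS (Finset.mem_of_mem_erase h)
      have hcard : (insert i (S.erase j)).card = S.card := by
        rw [Finset.card_insert_of_notMem hiE, Finset.card_erase_of_mem hjS]
        have : 1 ≤ S.card := Finset.card_pos.mpr ⟨j, hjS⟩
        omega
      have e3 : ∑ t ∈ S.erase j, borelMoveVec n a i j t = ∑ t ∈ S.erase j, a t := by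
        refine Finset.sum_congr rfl (fun t ht => ?_)
        simp only [Finset.mem_erase] at ht
        unfold borelMoveVec
        rw [if_neg (fun h => hiS (by rw [← h]; exact ht.2)), if_neg ht.1]
      have hj1 : borelMoveVec n a i j j = a j - 1 := by
        unfold borelMoveVec; rw [if_neg (Ne.symm hne), if_pos rfl]
      calc L a S.card = L a (insert i (S.erase j)).card := by rw [hcard]
        _ ≤ ∑ t ∈ insert i (S.erase j), a t := lowSum_le_sum ha _ _ rfl
        _ = a i + ∑ t ∈ S.erase j, a t := Finset.sum_insert hiE
        _ ≤ (a j - 1) + ∑ t ∈ S.erase j, borelMoveVec n a i j t := by rw [e3]; omega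
        _ = borelMoveVec n a i j j + ∑ t ∈ S.erase j, borelMoveVec n a i j t := by rw [hj1]
        _ = ∑ t ∈ S, borelMoveVec n a i j t := Finset.add_sum_erase _ _ hjS
  · -- j ∉ S
    calc L a S.card ≤ ∑ t ∈ S, a t := lowSum_le_sum ha S.card S rfl
      _ ≤ ∑ t ∈ S, borelMoveVec n a i j t :=
        Finset.sum_le_sum (fun t ht => hbge t (fun h => hjS (by rw [← h]; exact ht)))


lemma sssi_mem_aux {I : Ideal (MvPolynomial (Fin n) K)} (hI : IsSSSI K n I)
    (a : Fin n → ℕ) (ha : Monotone a) :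
    ∀ (m : ℕ) (lam : Fin n → ℕ), Monotone lam → mon K n lam ∈ I →
      (∑ t, (lam t - a t)) = m → (∀ k, L lam k ≤ L a k) → mon K n a ∈ I := by
  intro m
  induction m using Nat.strong_induction_on with
  | _ m IH =>
  intro lam hlam hlamI hm hL
  by_cases hle : ∀ t, lam t ≤ a t
  · exact mon_dvd_mem hlamI hle
  push_neg at hle
  have hTne : (Finset.univ.filter (fun t => a t < lam t)).Nonempty := by
    obtain ⟨t, ht⟩ := hle
    exact ⟨t, by simp only [Finset.mem_filter]; exact ⟨Finset.mem_univ _, ht⟩⟩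
  set T := Finset.univ.filter (fun t => a t < lam t) with hT
  set j := T.min' hTne with hj
  have hjT : j ∈ T := T.min'_mem hTne
  have hja : a j < lam j := (Finset.mem_filter.mp hjT).2
  have hjmin : ∀ t : Fin n, t < j → lam t ≤ a t := by
    intro t ht
    by_contra hcon
    push_neg at hcon
    have htT : t ∈ T := by
      simp only [hT, Finset.mem_filter]; exact ⟨Finset.mem_univ _, hcon⟩
    exact absurd (T.min'_le t htT) (not_le.mpr ht)
  have hiex : ∃ i : Fin n, i < j ∧ lam i < a i := by
    by_contra hcon
    push_neg at hcon
    have heq : ∀ t : Fin n, t < j → a t = lam t :=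
      fun t ht => le_antisymm (hcon t ht) (hjmin t ht)
    have h1 := hL ((j:ℕ)+1)
    have e1 : L a ((j:ℕ)+1) = L a (j:ℕ) + a j := by
      rw [L_succ a j.isLt]
    have e2 : L lam ((j:ℕ)+1) = L lam (j:ℕ) + lam j := by
      rw [L_succ lam j.isLt]
    have e3 : L a (j:ℕ) = L lam (j:ℕ) :=
      L_congr (fun t ht => heq t (Fin.lt_def.mpr ht))
    omega
  obtain ⟨i, hij, hia⟩ := hiex
  -- block endpoints
  have hTine : (Finset.univ.filter (fun t => lam t = lam i)).Nonempty :=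
    ⟨i, by simp⟩
  set i' := (Finset.univ.filter (fun t => lam t = lam i)).max' hTine with hi'
  have hi'mem : lam i' = lam i :=
    (Finset.mem_filter.mp ((Finset.univ.filter (fun t => lam t = lam i)).max'_mem hTine)).2
  have hii' : i ≤ i' := Finset.le_max' _ i (by simp)
  have hi'max : ∀ t, i' < t → lam i + 1 ≤ lam t := by
    intro t ht
    have h1 : lam i' ≤ lam t := hlam (le_of_lt ht)
    have h2 : lam t ≠ lam i := by
      intro h
      exact absurd (Finset.le_max' _ t (by simp [h])) (not_le.mpr ht)
    omega
  have hTjne : (Finset.univ.filter (fun t => lam t = lam j)).Nonempty :=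
    ⟨j, by simp⟩
  set j' := (Finset.univ.filter (fun t => lam t = lam j)).min' hTjne with hj'
  have hj'mem : lam j' = lam j :=
    (Finset.mem_filter.mp ((Finset.univ.filter (fun t => lam t = lam j)).min'_mem hTjne)).2
  have hj'le : j' ≤ j := Finset.min'_le _ j (by simp)
  have hj'min : ∀ t, t < j' → lam t + 1 ≤ lam j := by
    intro t ht
    have h1 : lam t ≤ lam j' := hlam (le_of_lt ht)
    have h2 : lam t ≠ lam j := by
      intro h
      exact absurd (Finset.min'_le _ t (by simp [h])) (not_le.mpr ht)
    omega
  have haij : a i ≤ a j := ha (le_of_lt hij)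
  have hu2v : lam i + 2 ≤ lam j := by omega
  have hij' : i' < j' := by
    by_contra h
    push_neg at h
    have := hlam h
    omega
  have hne' : i' ≠ j' := ne_of_lt hij'
  set lam'' := borelMoveVec n lam i' j' with hlam''
  have hbi' : lam'' i' = lam i' + 1 := by
    simp only [hlam'', borelMoveVec, eq_self_iff_true, if_true]
  have hbj' : lam'' j' = lam j' - 1 := by
    simp only [hlam'', borelMoveVec, if_neg (Ne.symm hne'), eq_self_iff_true, if_true]
  have hbother : ∀ t, t ≠ i' → t ≠ j' → lam'' t = lam t := by
    intro t h1 h2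
    simp only [hlam'', borelMoveVec, if_neg h1, if_neg h2]
  have hai' : lam i' + 1 ≤ a i' := by
    have := ha hii'
    omega
  have haj' : a j' + 1 ≤ lam j' := by
    have := ha hj'le
    omega
  have hmono'' : Monotone lam'' := by
    intro s t hst
    rcases eq_or_ne s i' with rfl | hsi
    · rcases eq_or_ne t i' with rfl | hti
      · exact le_refl _
      · have hst' : i' < t := lt_of_le_of_ne hst (Ne.symm hti)
        rcases eq_or_ne t j' with rfl | htj
        · rw [hbi', hbj']; omega
        · rw [hbi', hbother t hti htj]
          have h3 := hi'max t hst'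
          omega
    · rcases eq_or_ne s j' with rfl | hsj
      · have hti : t ≠ i' := by
          intro h
          rw [h] at hst
          exact absurd hst (not_le.mpr hij')
        rcases eq_or_ne t j' with rfl | htj
        · exact le_refl _
        · rw [hbj', hbother t hti htj]
          have := hlam hst
          omega
      · rcases eq_or_ne t i' with rfl | hti
        · rw [hbother s hsi hsj, hbi']
          exact le_trans (hlam hst) (Nat.le_succ _)
        rcases eq_or_ne t j' with rfl | htj
        · rw [hbother s hsi hsj, hbj']
          have hs : s < j' := lt_of_le_of_ne hst hsj
          have := hj'min s hs
          omega
        · rw [hbother s hsi hsj, hbother t hti htj]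
          exact hlam hst
  have hlam''I : mon K n lam'' ∈ I :=
    hI.2.2 lam hlam hlamI i' j' hij' (by omega)
  -- key sum identity
  have hkey : ∀ k, L lam'' k + (if (j':Fin n).val < k then 1 else 0)
      = L lam k + (if (i':Fin n).val < k then 1 else 0) := by
    intro k
    have e1 : (if (j':Fin n).val < k then 1 else 0)
        = ∑ t : Fin n, if t = j' then (if (t:ℕ) < k then 1 else 0) else 0 := by
      rw [Finset.sum_ite_eq' Finset.univ j' (fun t => if (t:ℕ) < k then 1 else 0),
        if_pos (Finset.mem_univ _)]
    have e2 : (if (i':Fin n).val < k then 1 else 0)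
        = ∑ t : Fin n, if t = i' then (if (t:ℕ) < k then 1 else 0) else 0 := by
      rw [Finset.sum_ite_eq' Finset.univ i' (fun t => if (t:ℕ) < k then 1 else 0),
        if_pos (Finset.mem_univ _)]
    rw [e1, e2]
    unfold L
    rw [← Finset.sum_add_distrib, ← Finset.sum_add_distrib]
    refine Finset.sum_congr rfl (fun t _ => ?_)
    rcases eq_or_ne t i' with rfl | hti
    · rw [hbi', if_neg hne', if_pos rfl, add_zero]
      split_ifs <;> omega
    · rcases eq_or_ne t j' with rfl | htj
      · rw [hbj', if_pos rfl, if_neg (Ne.symm hne')]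
        have h1 : 1 ≤ lam j' := by omega
        split_ifs <;> omega
      · rw [hbother t hti htj, if_neg hti, if_neg htj]
  have hLnew : ∀ k, L lam'' k ≤ L a k := by
    intro k
    have hk := hkey k
    by_cases h1 : (j':Fin n).val < k
    · have h2 : (i':Fin n).val < k := lt_trans (Fin.lt_def.mp hij') h1
      rw [if_pos h1, if_pos h2] at hk
      have := hL k
      omega
    · by_cases h2 : (i':Fin n).val < k
      · rw [if_neg h1, if_pos h2] at hk
        -- strict bound needed
        have hik : (i:ℕ) < k := by
          have : (i:ℕ) ≤ (i':Fin n).val := hii'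
          omega
        have hb : ∀ t : Fin n, (t:ℕ) < k → lam t ≤ a t := by
          intro t ht
          refine hjmin t ?_
          rw [Fin.lt_def]
          have h3 : (j':Fin n).val ≤ (j:Fin n).val := hj'le
          omega
        have hstrict : L lam k + 1 ≤ L a k := by
          have e2 : (1:ℕ) = ∑ t : Fin n, if t = i then (if (t:ℕ) < k then 1 else 0) else 0 := by
            rw [Finset.sum_ite_eq' Finset.univ i (fun t => if (t:ℕ) < k then 1 else 0),
              if_pos (Finset.mem_univ _), if_pos hik]
          calc L lam k + 1
              = ∑ t : Fin n, ((if (t:ℕ) < k then lam t else 0)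
                  + (if t = i then (if (t:ℕ) < k then 1 else 0) else 0)) := by
                rw [Finset.sum_add_distrib, ← e2]
                rfl
            _ ≤ ∑ t : Fin n, (if (t:ℕ) < k then a t else 0) := by
                refine Finset.sum_le_sum (fun t _ => ?_)
                rcases eq_or_ne t i with rfl | hti
                · simp only [eq_self_iff_true, if_true, if_pos hik]
                  omega
                · rw [if_neg hti, add_zero]
                  by_cases h3 : (t:ℕ) < k
                  · rw [if_pos h3, if_pos h3]
                    exact hb t h3
                  · rw [if_neg h3, if_neg h3]
            _ = L a k := rfl
        omega
      · rw [if_neg h1, if_neg h2] at hk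
        have := hL k
        omega
  -- measure decreases
  have hmeasure : (∑ t, (lam'' t - a t)) + 1 = m := by
    rw [← hm]
    have e1 : (1:ℕ) = ∑ t : Fin n, if t = j' then 1 else 0 := by
      rw [Finset.sum_ite_eq' Finset.univ j' (fun _ => 1), if_pos (Finset.mem_univ _)]
    conv_lhs => rw [e1]
    rw [← Finset.sum_add_distrib]
    refine Finset.sum_congr rfl (fun t _ => ?_)
    rcases eq_or_ne t i' with rfl | hti
    · rw [hbi', if_neg hne']
      omega
    · rcases eq_or_ne t j' with rfl | htj
      · rw [hbj', if_pos rfl]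
        omega
      · rw [hbother t hti htj, if_neg htj, add_zero]
  have hm1 : 1 ≤ m := by
    rw [← hm]
    calc (1:ℕ) ≤ lam j - a j := by omega
      _ ≤ ∑ t, (lam t - a t) :=
        Finset.single_le_sum (f := fun t => lam t - a t) (fun t _ => Nat.zero_le _)
          (Finset.mem_univ j)
  exact IH (m-1) (by omega) lam'' hmono'' hlam''I (by omega) hLnew


lemma mem_perm {I : Ideal (MvPolynomial (Fin n) K)} (hsym : IsSymmetricIdeal K n I)
    {a : Fin n → ℕ} (h : mon K n a ∈ I) (σ : Equiv.Perm (Fin n)) :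
    mon K n (a ∘ ⇑σ) ∈ I := by
  have hmap := hsym σ⁻¹
  rw [← hmap]
  have he : mon K n (a ∘ ⇑σ) = rename (⇑(σ⁻¹ : Equiv.Perm (Fin n))) (mon K n a) := by
    rw [rename_mon]
    congr 1
  rw [he]
  exact Ideal.mem_map_of_mem _ h

lemma sum_range_ite_lt (k : ℕ) : ∀ m, (∑ i ∈ Finset.range m, if i < k then 1 else 0) = min m k := by
  intro m
  induction m with
  | zero => simp
  | succ m ih =>
    rw [Finset.sum_range_succ, ih]
    by_cases h : m < k
    · rw [if_pos h]; omega
    · rw [if_neg h]; omega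

lemma card_filter_lt {n : ℕ} (k : ℕ) (hk : k ≤ n) :
    (Finset.univ.filter (fun t : Fin n => (t:ℕ) < k)).card = k := by
  rw [Finset.card_filter]
  rw [Fin.sum_univ_eq_sum_range (fun i => if i < k then 1 else 0) n]
  rw [sum_range_ite_lt]
  omega

lemma sssi_mem {I : Ideal (MvPolynomial (Fin n) K)} (hI : IsSSSI K n I)
    {lam : Fin n → ℕ} (hlam : Monotone lam) (hlamI : mon K n lam ∈ I)
    (a : Fin n → ℕ)
    (h : ∀ S : Finset (Fin n), L lam S.card ≤ ∑ t ∈ S, a t) : mon K n a ∈ I := by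
  set τ := Tuple.sort a with hτ
  have hmono : Monotone (a ∘ ⇑τ) := Tuple.monotone_sort a
  have hback : mon K n (a ∘ ⇑τ) ∈ I → mon K n a ∈ I := by
    intro hmem
    have h2 := mem_perm hI.2.1 hmem τ⁻¹
    have h3 : (a ∘ ⇑τ) ∘ ⇑(τ⁻¹ : Equiv.Perm (Fin n)) = a := by
      funext t; simp
    rwa [h3] at h2
  apply hback
  apply sssi_mem_aux hI (a ∘ ⇑τ) hmono (∑ t, (lam t - (a ∘ ⇑τ) t)) lam hlam hlamI rfl
  intro k
  by_cases hk : k ≤ n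
  · set F := Finset.univ.filter (fun t : Fin n => (t:ℕ) < k) with hF
    have hFcard : F.card = k := card_filter_lt k hk
    have hicard : (F.image ⇑τ).card = k := by
      rw [Finset.card_image_of_injective _ τ.injective, hFcard]
    have h1 := h (F.image ⇑τ)
    rw [hicard] at h1
    have hsum : ∑ t ∈ F.image ⇑τ, a t = L (a ∘ ⇑τ) k := by
      rw [Finset.sum_image (fun x _ y _ hxy => τ.injective hxy)]
      rw [hF, Finset.sum_filter]
      rfl
    rw [hsum] at h1
    exact h1
  · push_neg at hk
    have h1 := h Finset.univ
    rw [Finset.card_univ, Fintype.card_fin] at h1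
    have e1 : L lam k = L lam n := by
      rw [L_eq_total (le_of_lt hk), L_eq_total (le_refl n)]
    have e2 : L (a ∘ ⇑τ) k = ∑ t, a t := by
      rw [L_eq_total (le_of_lt hk)]
      exact Equiv.sum_comp τ a
    rw [e1, e2]
    exact h1

def sqSet (n c : ℕ) : Set (Fin n → ℕ) := {a | (∀ i, a i ≤ 1) ∧ ∑ i, a i = n - c + 1}

lemma vero_eq (K : Type) [Field K] (n c : ℕ) :
    vero K n c = Ideal.span (mon K n '' sqSet n c) := rfl

def VNset (n c : ℕ) : ℕ → Set (Fin n → ℕ)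
  | 0 => {0}
  | (N+1) => Set.image2 (· + ·) (VNset n c N) (sqSet n c)

lemma mon_zero : mon K n (0 : Fin n → ℕ) = 1 := by
  have : fs (0 : Fin n → ℕ) = 0 := by ext i; simp
  rw [mon_eq, this]
  simp [monomial_zero']

open Pointwise in
lemma mon_image_mul (A B : Set (Fin n → ℕ)) :
    (mon K n '' A) * (mon K n '' B) = mon K n '' (Set.image2 (· + ·) A B) := by
  rw [← Set.image2_mul, Set.image2_image_left, Set.image2_image_right]
  have h1 : Set.image2 (fun a b => mon K n a * mon K n b) A B
      = Set.image2 (fun a b => mon K n (a + b)) A B :=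
    Set.image2_congr (fun a _ b _ => mon_mul a b)
  rw [h1]
  exact (Set.image_image2 (fun x1 x2 => x1 + x2) (mon K n)).symm

lemma vero_pow (K : Type) [Field K] (n c : ℕ) :
    ∀ N, (vero K n c)^N = Ideal.span (mon K n '' VNset n c N) := by
  intro N
  induction N with
  | zero =>
    rw [pow_zero, Ideal.one_eq_top, show VNset n c 0 = {0} from rfl,
      Set.image_singleton, mon_zero, Ideal.span_singleton_one]
  | succ N ih =>
    rw [pow_succ, ih, vero_eq, Ideal.span_mul_span', mon_image_mul]
    rfl


lemma VNset_sum {n c : ℕ} (hc1 : 1 ≤ c) (hc2 : c ≤ n) :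
    ∀ N, ∀ b ∈ VNset n c N, ∀ S : Finset (Fin n), c ≤ S.card → N ≤ ∑ t ∈ S, b t := by
  intro N
  induction N with
  | zero => intro b hb S hS; exact Nat.zero_le _
  | succ N ih =>
    intro b hb S hS
    obtain ⟨b', hb', q, hq, hbe⟩ := hb
    have hbe' : ∀ t, b t = b' t + q t := fun t => by rw [← hbe]; rfl
    have h1 : 1 ≤ ∑ t ∈ S, q t := by
      by_contra hcon
      push_neg at hcon
      have hz : ∀ t ∈ S, q t = 0 := by
        intro t ht
        have := Finset.single_le_sum (f := q) (fun _ _ => Nat.zero_le _) ht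
        omega
      have htot : ∑ t, q t = ∑ t ∈ Sᶜ, q t := by
        rw [← Finset.sum_add_sum_compl S q, Finset.sum_eq_zero hz, zero_add]
      have hle : ∑ t ∈ Sᶜ, q t ≤ Sᶜ.card := by
        calc ∑ t ∈ Sᶜ, q t ≤ ∑ _t ∈ Sᶜ, 1 := Finset.sum_le_sum (fun t _ => hq.1 t)
          _ = Sᶜ.card := by rw [Finset.sum_const, smul_eq_mul, mul_one]
      have hcc : Sᶜ.card = n - S.card := by
        rw [Finset.card_compl, Fintype.card_fin]
      have h2 := hq.2
      omega
    have h3 := ih b' hb' S hS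
    have hsum : ∑ t ∈ S, b t = ∑ t ∈ S, b' t + ∑ t ∈ S, q t := by
      rw [← Finset.sum_add_distrib]
      exact Finset.sum_congr rfl (fun t _ => hbe' t)
    omega

def s0 (n c : ℕ) : Fin n → ℕ := fun i => if c - 1 ≤ (i:ℕ) then 1 else 0

lemma s0_mono (n c : ℕ) : Monotone (s0 n c) := by
  intro s t hst
  unfold s0
  have : (s:ℕ) ≤ (t:ℕ) := hst
  split_ifs <;> omega

lemma sum_range_ite_ge (c : ℕ) : ∀ m, (∑ i ∈ Finset.range m, if c - 1 ≤ i then 1 else 0) = m - (c-1) := by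
  intro m
  induction m with
  | zero => simp
  | succ m ih =>
    rw [Finset.sum_range_succ, ih]
    by_cases h : c - 1 ≤ m
    · rw [if_pos h]; omega
    · rw [if_neg h]; omega

lemma s0_mem {n c : ℕ} (hc1 : 1 ≤ c) (hc2 : c ≤ n) : s0 n c ∈ sqSet n c := by
  constructor
  · intro i
    unfold s0
    split_ifs <;> omega
  · unfold s0
    rw [Fin.sum_univ_eq_sum_range (fun i => if c - 1 ≤ i then 1 else 0) n]
    rw [sum_range_ite_ge]
    omega

lemma sqSet_perm {n c : ℕ} {q : Fin n → ℕ} (hq : q ∈ sqSet n c) (σ : Equiv.Perm (Fin n)) :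
    q ∘ ⇑σ ∈ sqSet n c := by
  refine ⟨fun i => hq.1 _, ?_⟩
  rw [show ∑ i, (q ∘ ⇑σ) i = ∑ i, q (σ i) from rfl, Equiv.sum_comp σ q]
  exact hq.2

lemma mon_smul_mem_pow {n c : ℕ} {q : Fin n → ℕ} (hq : q ∈ sqSet n c) (N : ℕ) :
    mon K n (N • q) ∈ (vero K n c)^N := by
  rw [← mon_pow]
  have hq' : mon K n q ∈ vero K n c := by
    rw [vero_eq]
    exact Ideal.subset_span (Set.mem_image_of_mem _ hq)
  exact Ideal.pow_mem_pow hq' N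

lemma vero_symm (K : Type) [Field K] (n c : ℕ) (σ : Equiv.Perm (Fin n)) :
    Ideal.map (rename (σ : Fin n → Fin n)) (vero K n c) = vero K n c := by
  rw [vero_eq, Ideal.map_span]
  congr 1
  ext f
  simp only [Set.mem_image]
  constructor
  · rintro ⟨g, ⟨q, hq, rfl⟩, rfl⟩
    exact ⟨q ∘ ⇑σ.symm, sqSet_perm hq σ.symm, (rename_mon σ q).symm⟩
  · rintro ⟨q, hq, rfl⟩
    refine ⟨mon K n (q ∘ ⇑σ), ⟨q ∘ ⇑σ, sqSet_perm hq σ, rfl⟩, ?_⟩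
    rw [rename_mon]
    congr 1
    funext i
    simp

lemma vero_pow_symm (K : Type) [Field K] (n c N : ℕ) (σ : Equiv.Perm (Fin n)) :
    Ideal.map (rename (σ : Fin n → Fin n)) ((vero K n c)^N) = (vero K n c)^N := by
  rw [Ideal.map_pow, vero_symm]

lemma rename_colon {I : Ideal (MvPolynomial (Fin n) K)} (hsym : IsSymmetricIdeal K n I)
    {c N : ℕ} {f : MvPolynomial (Fin n) K}
    (hf : f ∈ Submodule.colon I (((vero K n c) ^ N : Ideal (MvPolynomial (Fin n) K)) : Set (MvPolynomial (Fin n) K))) (σ : Equiv.Perm (Fin n)) :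
    rename (σ : Fin n → Fin n) f ∈ Submodule.colon I (((vero K n c) ^ N : Ideal (MvPolynomial (Fin n) K)) : Set (MvPolynomial (Fin n) K)) := by
  rw [Submodule.mem_colon] at *
  intro p hp
  have hq : rename (⇑(σ⁻¹ : Equiv.Perm (Fin n))) p ∈ (vero K n c)^N := by
    rw [← vero_pow_symm K n c N σ⁻¹]
    exact Ideal.mem_map_of_mem _ hp
  have hfq : f * rename (⇑(σ⁻¹ : Equiv.Perm (Fin n))) p ∈ I := hf _ hq
  have key : rename (σ : Fin n → Fin n) f • p
      = rename (σ : Fin n → Fin n) (f * rename (⇑(σ⁻¹ : Equiv.Perm (Fin n))) p) := by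
    rw [smul_eq_mul, map_mul]
    congr 1
    rw [rename_rename]
    have : (σ : Fin n → Fin n) ∘ ⇑(σ⁻¹ : Equiv.Perm (Fin n)) = id := by
      funext t; simp
    rw [this, rename_id, AlgHom.id_apply]
  rw [key, ← hsym σ]
  exact Ideal.mem_map_of_mem _ hfq

lemma colon_mono_pow {I : Ideal (MvPolynomial (Fin n) K)} {c : ℕ} :
    Monotone (fun k : ℕ => Submodule.colon I (((vero K n c) ^ k : Ideal (MvPolynomial (Fin n) K)) : Set (MvPolynomial (Fin n) K))) := by
  intro k l hkl
  intro r hr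
  rw [Submodule.mem_colon] at *
  intro p hp
  exact hr p (Ideal.pow_le_pow_right hkl hp)

lemma mem_sat_iff {I : Ideal (MvPolynomial (Fin n) K)} {c : ℕ}
    {f : MvPolynomial (Fin n) K} :
    (f ∈ ⨆ k : ℕ, Submodule.colon I (((vero K n c) ^ k : Ideal (MvPolynomial (Fin n) K)) : Set (MvPolynomial (Fin n) K))) ↔
      ∃ N, f ∈ Submodule.colon I (((vero K n c) ^ N : Ideal (MvPolynomial (Fin n) K)) : Set (MvPolynomial (Fin n) K)) :=
  Submodule.mem_iSup_of_directed _ colon_mono_pow.directed_le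


lemma mul_mem_of_gen {I : Ideal (MvPolynomial (Fin n) K)} {G : Set (MvPolynomial (Fin n) K)}
    {f : MvPolynomial (Fin n) K} (hgen : ∀ g ∈ G, f * g ∈ I) {p : MvPolynomial (Fin n) K}
    (hp : p ∈ Ideal.span G) : f * p ∈ I := by
  refine Submodule.span_induction (p := fun x _ => f * x ∈ I) ?_ ?_ ?_ ?_ hp
  · exact fun x hx => hgen x hx
  · show f * 0 ∈ I
    rw [mul_zero]; exact I.zero_mem
  · intro x y _ _ hx hy
    show f * (x + y) ∈ I
    rw [mul_add]; exact I.add_mem hx hy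
  · intro r x _ hx
    show f * (r • x) ∈ I
    rw [smul_eq_mul, mul_left_comm]
    exact Ideal.mul_mem_left _ _ hx

def Bset (K : Type) [Field K] (n c : ℕ) (I : Ideal (MvPolynomial (Fin n) K)) :
    Set (Fin n → ℕ) :=
  {b | ∃ (σ : Equiv.Perm (Fin n)) (μ : Fin n → ℕ), Monotone μ ∧
    (∃ lam : Fin n → ℕ, Monotone lam ∧ mon K n lam ∈ I ∧
      ∀ i : Fin n, (i : ℕ) < c - 1 → μ i = lam i) ∧ b = μ ∘ ⇑σ.symm}

lemma Tset_eq (K : Type) [Field K] (n c : ℕ) (I : Ideal (MvPolynomial (Fin n) K)) :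
    {f | ∃ (σ : Equiv.Perm (Fin n)) (μ : Fin n → ℕ), Monotone μ ∧
        (∃ lam : Fin n → ℕ, Monotone lam ∧ mon K n lam ∈ I ∧
          ∀ i : Fin n, (i : ℕ) < c - 1 → μ i = lam i) ∧
        f = rename (σ : Fin n → Fin n) (mon K n μ)} = mon K n '' Bset K n c I := by
  ext f
  constructor
  · rintro ⟨σ, μ, hμ, hex, rfl⟩
    exact ⟨μ ∘ ⇑σ.symm, ⟨σ, μ, hμ, hex, rfl⟩, (rename_mon σ μ).symm⟩
  · rintro ⟨b, ⟨σ, μ, hμ, hex, rfl⟩, rfl⟩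
    exact ⟨σ, μ, hμ, hex, (rename_mon σ μ).symm⟩

lemma gen_mem_colon {c : ℕ} {I : Ideal (MvPolynomial (Fin n) K)} (hI : IsSSSI K n I)
    (hc1 : 1 ≤ c) (hc2 : c ≤ n) {μ lam : Fin n → ℕ} (hμ : Monotone μ)
    (hlam : Monotone lam) (hlamI : mon K n lam ∈ I)
    (hagree : ∀ i : Fin n, (i : ℕ) < c - 1 → μ i = lam i) :
    mon K n μ ∈ Submodule.colon (I : Submodule _ _) (((vero K n c) ^ (∑ t, lam t) : Ideal (MvPolynomial (Fin n) K)) : Set (MvPolynomial (Fin n) K)) := by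
  rw [Submodule.mem_colon]
  intro p hp
  rw [smul_eq_mul]
  rw [vero_pow] at hp
  refine mul_mem_of_gen ?_ hp
  rintro g ⟨b, hb, rfl⟩
  rw [mon_mul]
  refine sssi_mem hI hlam hlamI _ (fun S => ?_)
  by_cases hcS : c ≤ S.card
  · calc L lam S.card ≤ ∑ t, lam t := L_le_total lam S.card
      _ ≤ ∑ t ∈ S, b t := VNset_sum hc1 hc2 _ b hb S hcS
      _ ≤ ∑ t ∈ S, (μ + b) t := Finset.sum_le_sum (fun t _ => by
          show b t ≤ μ t + b t
          omega)
  · push_neg at hcS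
    calc L lam S.card = L μ S.card :=
        (L_congr (fun t ht => hagree t (by omega))).symm
      _ ≤ ∑ t ∈ S, μ t := lowSum_le_sum hμ S.card S rfl
      _ ≤ ∑ t ∈ S, (μ + b) t := Finset.sum_le_sum (fun t _ => by
          show μ t ≤ μ t + b t
          omega)

lemma sat_symmetric {c : ℕ} {I : Ideal (MvPolynomial (Fin n) K)}
    (hsym : IsSymmetricIdeal K n I) :
    IsSymmetricIdeal K n (⨆ k : ℕ, Submodule.colon (I : Submodule _ _) (((vero K n c) ^ k : Ideal (MvPolynomial (Fin n) K)) : Set (MvPolynomial (Fin n) K))) := by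
  intro σ
  apply le_antisymm
  · rw [Ideal.map_le_iff_le_comap]
    intro f hf
    rw [Ideal.mem_comap]
    obtain ⟨N, hN⟩ := mem_sat_iff.mp hf
    exact mem_sat_iff.mpr ⟨N, rename_colon hsym hN σ⟩
  · intro f hf
    obtain ⟨N, hN⟩ := mem_sat_iff.mp hf
    have h2 := rename_colon hsym hN σ⁻¹
    have heq : f = rename (σ : Fin n → Fin n) (rename (⇑(σ⁻¹ : Equiv.Perm (Fin n))) f) := by
      rw [rename_rename]
      have : (σ : Fin n → Fin n) ∘ ⇑(σ⁻¹ : Equiv.Perm (Fin n)) = id := by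
        funext t; simp
      rw [this, rename_id, AlgHom.id_apply]
    rw [heq]
    exact Ideal.mem_map_of_mem _ (mem_sat_iff.mpr ⟨N, h2⟩)

lemma sat_le_span {c : ℕ} {I : Ideal (MvPolynomial (Fin n) K)} (hI : IsSSSI K n I)
    (hc1 : 1 ≤ c) (hc2 : c ≤ n) :
    (⨆ k : ℕ, Submodule.colon (I : Submodule _ _) (((vero K n c) ^ k : Ideal (MvPolynomial (Fin n) K)) : Set (MvPolynomial (Fin n) K))) ≤
      Ideal.span (mon K n '' Bset K n c I) := by
  intro f hf
  obtain ⟨N, hN⟩ := mem_sat_iff.mp hf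
  rw [mem_span_mon_iff]
  intro d hd
  set τ := Tuple.sort (⇑d : Fin n → ℕ) with hτ
  set e : Fin n → ℕ := N • (s0 n c ∘ ⇑τ.symm) with he
  have heV : mon K n e ∈ (vero K n c)^N :=
    mon_smul_mem_pow (sqSet_perm (s0_mem hc1 hc2) τ.symm) N
  have hfe : f * mon K n e ∈ I := by
    have := Submodule.mem_colon.mp hN _ heV
    rwa [smul_eq_mul] at this
  obtain ⟨SI, hSI⟩ := hI.1
  rw [hSI, mem_span_mon_iff] at hfe
  have hdmem : d + fs e ∈ (f * mon K n e).support := by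
    rw [MvPolynomial.mem_support_iff, mon_eq, MvPolynomial.coeff_mul_monomial, mul_one]
    exact MvPolynomial.mem_support_iff.mp hd
  obtain ⟨s, hsSI, hsle⟩ := hfe _ hdmem
  have hmonI : mon K n (⇑d + e) ∈ I := by
    rw [hSI, mon_mem_span_iff]
    refine ⟨s, hsSI, fun t => ?_⟩
    have h1 := hsle t
    simpa [fs_add] using h1
  set lam : Fin n → ℕ := (⇑d ∘ ⇑τ) + N • s0 n c with hlam
  have hlam_mono : Monotone lam := by
    intro x y hxy
    have h1 : (⇑d ∘ ⇑τ) x ≤ (⇑d ∘ ⇑τ) y := Tuple.monotone_sort (⇑d) hxy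
    have h2 : s0 n c x ≤ s0 n c y := s0_mono n c hxy
    show (⇑d ∘ ⇑τ) x + N * s0 n c x ≤ (⇑d ∘ ⇑τ) y + N * s0 n c y
    exact Nat.add_le_add h1 (Nat.mul_le_mul_left N h2)
  have hlamI : mon K n lam ∈ I := by
    have h2 := mem_perm hI.2.1 hmonI τ
    have he2 : (⇑d + e) ∘ ⇑τ = lam := by
      funext t
      show (⇑d) (τ t) + N * s0 n c (τ.symm (τ t)) = (⇑d) (τ t) + N * s0 n c t
      rw [Equiv.symm_apply_apply]
    rwa [he2] at h2
  refine ⟨⇑d, ⟨τ, ⇑d ∘ ⇑τ, Tuple.monotone_sort (⇑d), ⟨lam, hlam_mono, hlamI, ?_⟩, ?_⟩,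
    fun t => le_refl _⟩
  · intro i hi
    show (⇑d ∘ ⇑τ) i = (⇑d ∘ ⇑τ) i + N * s0 n c i
    have : s0 n c i = 0 := by
      unfold s0
      rw [if_neg (by omega)]
    rw [this]
    omega
  · funext t
    show (⇑d) t = (⇑d) (τ (τ.symm t))
    rw [Equiv.apply_symm_apply]

lemma span_le_sat {c : ℕ} {I : Ideal (MvPolynomial (Fin n) K)} (hI : IsSSSI K n I)
    (hc1 : 1 ≤ c) (hc2 : c ≤ n) :
    Ideal.span (mon K n '' Bset K n c I) ≤
      (⨆ k : ℕ, Submodule.colon (I : Submodule _ _) (((vero K n c) ^ k : Ideal (MvPolynomial (Fin n) K)) : Set (MvPolynomial (Fin n) K))) := by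
  rw [Ideal.span_le]
  rintro g ⟨b, ⟨σ, μ, hμ, ⟨lam, hlam, hlamI, hagree⟩, rfl⟩, rfl⟩
  have h1 := gen_mem_colon hI hc1 hc2 hμ hlam hlamI hagree
  have h2 : rename (σ : Fin n → Fin n) (mon K n μ)
      ∈ Submodule.colon (I : Submodule _ _) (((vero K n c) ^ (∑ t, lam t) : Ideal (MvPolynomial (Fin n) K)) : Set (MvPolynomial (Fin n) K)) :=
    rename_colon hI.2.1 h1 σ
  rw [rename_mon] at h2
  exact SetLike.mem_coe.mpr (mem_sat_iff.mpr ⟨_, h2⟩)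

lemma sat_shifted {c : ℕ} {I : Ideal (MvPolynomial (Fin n) K)} (hI : IsSSSI K n I)
    (hc1 : 1 ≤ c) (hc2 : c ≤ n) :
    ∀ nu : Fin n → ℕ, Monotone nu →
      mon K n nu ∈ (⨆ k : ℕ, Submodule.colon (I : Submodule _ _) (((vero K n c) ^ k : Ideal (MvPolynomial (Fin n) K)) : Set (MvPolynomial (Fin n) K))) →
      ∀ i j : Fin n, i < j → nu i < nu j →
        mon K n (borelMoveVec n nu i j) ∈
          (⨆ k : ℕ, Submodule.colon (I : Submodule _ _) (((vero K n c) ^ k : Ideal (MvPolynomial (Fin n) K)) : Set (MvPolynomial (Fin n) K))) := by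
  intro nu hnu hmem i j hij hnuij
  obtain ⟨N₀, hN₀⟩ := mem_sat_iff.mp hmem
  set lam : Fin n → ℕ := nu + N₀ • s0 n c with hlamdef
  have hlam_mono : Monotone lam := by
    intro x y hxy
    show nu x + N₀ * s0 n c x ≤ nu y + N₀ * s0 n c y
    exact Nat.add_le_add (hnu hxy) (Nat.mul_le_mul_left N₀ (s0_mono n c hxy))
  have hlamI : mon K n lam ∈ I := by
    have heV : mon K n (N₀ • s0 n c) ∈ (vero K n c)^N₀ :=
      mon_smul_mem_pow (s0_mem hc1 hc2) N₀
    have := Submodule.mem_colon.mp hN₀ _ heV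
    rwa [smul_eq_mul, mon_mul] at this
  refine mem_sat_iff.mpr ⟨∑ t, lam t, ?_⟩
  rw [Submodule.mem_colon]
  intro p hp
  rw [smul_eq_mul]
  rw [vero_pow] at hp
  refine mul_mem_of_gen ?_ hp
  rintro g ⟨b, hb, rfl⟩
  rw [mon_mul]
  refine sssi_mem hI hlam_mono hlamI _ (fun S => ?_)
  by_cases hcS : c ≤ S.card
  · calc L lam S.card ≤ ∑ t, lam t := L_le_total lam S.card
      _ ≤ ∑ t ∈ S, b t := VNset_sum hc1 hc2 _ b hb S hcS
      _ ≤ ∑ t ∈ S, (borelMoveVec n nu i j + b) t := Finset.sum_le_sum (fun t _ => by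
          show b t ≤ borelMoveVec n nu i j t + b t
          omega)
  · push_neg at hcS
    have e1 : L lam S.card = L nu S.card := by
      refine L_congr (fun t ht => ?_)
      show nu t + N₀ * s0 n c t = nu t
      have : s0 n c t = 0 := by
        unfold s0
        rw [if_neg (by omega)]
      rw [this]
      omega
    calc L lam S.card = L nu S.card := e1
      _ ≤ ∑ t ∈ S, borelMoveVec n nu i j t := robinHood hnu hij hnuij S
      _ ≤ ∑ t ∈ S, (borelMoveVec n nu i j + b) t := Finset.sum_le_sum (fun t _ => by
          show borelMoveVec n nu i j t ≤ borelMoveVec n nu i j t + b t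
          omega)

end SatAux

/-- Let `I` be a symmetric strongly shifted ideal and `1 ≤ c ≤ n`. The
saturation `I : I_{n,c}^∞ = ∪_k (I : I_{n,c}^k)` equals the ideal generated by
all `σ(x^μ)` with `σ ∈ 𝔖_n` and `μ ∈ P_n` whose first `c − 1` entries agree
with those of some `λ ∈ P(I)`; moreover this saturation is symmetric strongly
shifted. -/
theorem saturation_of_sssi (K : Type) [Field K] (n : ℕ)
    (I : Ideal (MvPolynomial (Fin n) K)) (hI : IsSSSI K n I)
    (c : ℕ) (hc1 : 1 ≤ c) (hc2 : c ≤ n) :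
    (⨆ k : ℕ, Submodule.colon I (((vero K n c) ^ k : Ideal (MvPolynomial (Fin n) K)) : Set (MvPolynomial (Fin n) K))) =
      Ideal.span {f | ∃ (σ : Equiv.Perm (Fin n)) (μ : Fin n → ℕ), Monotone μ ∧
        (∃ lam : Fin n → ℕ, Monotone lam ∧ mon K n lam ∈ I ∧
          ∀ i : Fin n, (i : ℕ) < c - 1 → μ i = lam i) ∧
        f = rename (σ : Fin n → Fin n) (mon K n μ)} ∧
    IsSSSI K n (⨆ k : ℕ, Submodule.colon I (((vero K n c) ^ k : Ideal (MvPolynomial (Fin n) K)) : Set (MvPolynomial (Fin n) K))) := by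
  have heq : (⨆ k : ℕ, Submodule.colon I (((vero K n c) ^ k : Ideal (MvPolynomial (Fin n) K)) : Set (MvPolynomial (Fin n) K)))
      = Ideal.span (mon K n '' SatAux.Bset K n c I) :=
    le_antisymm (SatAux.sat_le_span hI hc1 hc2) (SatAux.span_le_sat hI hc1 hc2)
  constructor
  · rw [SatAux.Tset_eq]
    exact heq
  · exact ⟨⟨SatAux.Bset K n c I, heq⟩, SatAux.sat_symmetric hI.2.1,
      SatAux.sat_shifted hI hc1 hc2⟩
end
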